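/- arXiv:2304.04619 — 3 statements merged into one kernel-verified Lean document; each statement's English description precedes it below -/
import Mathlib

section
/- Let n = p_1^{k_1}⋯p_r^{k_r} with p_1, …, p_r distinct primes and k_i ≥ 1. Then the condition number of the twisted Vandermonde matrix satisfies Cond(TV_{K_n}) = φ(n) · (√2)^r · √(∏_{i=1}^r (1 − 1/p_i)). -/
/-- The Frobenius norm of a complex matrix: `√(∑_{i,j} |A_{ij}|²)`. -/
noncomputable def frobNorm {m n : Type*} [Fintype m] [Fintype n]
    (A : Matrix m n ℂ) : ℝ :=
  Real.sqrt (∑ i, ∑ j, ‖A i j‖ ^ 2)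

/-- The condition number `Cond(A) = ‖A‖ · ‖A⁻¹‖` (Frobenius norm). -/
noncomputable def condNum {n : Type*} [Fintype n] [DecidableEq n]
    (A : Matrix n n ℂ) : ℝ :=
  frobNorm A * frobNorm A⁻¹

/-- The iterated Kronecker product of the matrices `V i`, realized on the
canonical index set `∀ i, Fin (t i)`: its `(f, g)` entry is `∏ i, (V i) (f i) (g i)`. -/
noncomputable def kronProd {r : ℕ} {t : Fin r → ℕ}
    (V : ∀ i, Matrix (Fin (t i)) (Fin (t i)) ℂ) :
    Matrix (∀ i, Fin (t i)) (∀ i, Fin (t i)) ℂ :=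
  Matrix.of fun f g => ∏ i, V i (f i) (g i)

open Finset

namespace TVaux


lemma kronProd_mul {r : ℕ} {t : Fin r → ℕ} (V W : ∀ i, Matrix (Fin (t i)) (Fin (t i)) ℂ) :
    kronProd V * kronProd W = kronProd (fun i => V i * W i) := by
  ext f g
  simp only [kronProd, Matrix.mul_apply, Matrix.of_apply]
  rw [Fintype.prod_sum fun i x => V i (f i) x * W i x (g i)]
  exact Finset.sum_congr rfl fun h _ => Finset.prod_mul_distrib.symm

lemma kronProd_one {r : ℕ} {t : Fin r → ℕ} :
    kronProd (fun i : Fin r => (1 : Matrix (Fin (t i)) (Fin (t i)) ℂ)) = 1 := by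
  ext f g
  by_cases h : f = g
  · subst h
    simp [kronProd, Matrix.one_apply]
  · obtain ⟨i, hi⟩ := Function.ne_iff.1 h
    simp only [kronProd, Matrix.of_apply, Matrix.one_apply, if_neg h]
    exact Finset.prod_eq_zero (Finset.mem_univ i) (by simp [Matrix.one_apply, hi])

lemma sumsq_kron {r : ℕ} {t : Fin r → ℕ} (V : ∀ i, Matrix (Fin (t i)) (Fin (t i)) ℂ) :
    ∑ f : (∀ i, Fin (t i)), ∑ g : (∀ i, Fin (t i)), ‖kronProd V f g‖ ^ 2
      = ∏ i, ∑ a, ∑ b, ‖V i a b‖ ^ 2 := by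
  have h1 : ∀ f g : (∀ i, Fin (t i)),
      ‖kronProd V f g‖ ^ 2 = ∏ i, ‖V i (f i) (g i)‖ ^ 2 := by
    intro f g
    simp only [kronProd, Matrix.of_apply]
    rw [norm_prod, ← Finset.prod_pow]
  calc ∑ f : (∀ i, Fin (t i)), ∑ g : (∀ i, Fin (t i)), ‖kronProd V f g‖ ^ 2
      = ∑ f : (∀ i, Fin (t i)), ∑ g : (∀ i, Fin (t i)), ∏ i, ‖V i (f i) (g i)‖ ^ 2 := by
        exact Finset.sum_congr rfl fun f _ => Finset.sum_congr rfl fun g _ => h1 f g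
    _ = ∑ f : (∀ i, Fin (t i)), ∏ i, ∑ b, ‖V i (f i) b‖ ^ 2 := by
        exact Finset.sum_congr rfl fun f _ =>
          (Fintype.prod_sum fun i b => ‖V i (f i) b‖ ^ 2).symm
    _ = ∏ i, ∑ a, ∑ b, ‖V i a b‖ ^ 2 :=
        (Fintype.prod_sum fun i a => ∑ b, ‖V i a b‖ ^ 2).symm


lemma sqrt_pow'' (x : ℝ) (hx : 0 ≤ x) (n : ℕ) :
    Real.sqrt x ^ n = Real.sqrt (x ^ n) := by
  induction n with
  | zero => simp
  | succ n ih => rw [pow_succ, pow_succ, ih, Real.sqrt_mul (by positivity)]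

lemma totient_prod {ι : Type*} (s : Finset ι) (g : ι → ℕ)
    (h : ∀ i ∈ s, ∀ j ∈ s, i ≠ j → Nat.Coprime (g i) (g j)) :
    (∏ i ∈ s, g i).totient = ∏ i ∈ s, (g i).totient := by
  classical
  induction s using Finset.induction_on with
  | empty => simp
  | @insert a s hni ih =>
    rw [Finset.prod_insert hni, Finset.prod_insert hni,
      Nat.totient_mul (Nat.Coprime.prod_right fun i hi =>
        h a (Finset.mem_insert_self a s) i (Finset.mem_insert_of_mem hi)
          (fun he => hni (he ▸ hi))),
      ih fun i hi j hj hij =>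
        h i (Finset.mem_insert_of_mem hi) j (Finset.mem_insert_of_mem hj) hij]


lemma geom_sum_zero {z : ℂ} (h1 : z ≠ 1) {m : ℕ} (hm : z ^ m = 1) :
    ∑ j ∈ Finset.range m, z ^ j = 0 := by
  have h := geom_sum_mul z m
  rw [hm, sub_self] at h
  rcases mul_eq_zero.1 h with h' | h'
  · exact h'
  · exact absurd (sub_eq_zero.1 h') h1

lemma sum_range_mul' {M : Type*} [AddCommMonoid M] (f : ℕ → M) (n q : ℕ) :
    ∑ b ∈ Finset.range (n * q), f b
      = ∑ c ∈ Finset.range n, ∑ d ∈ Finset.range q, f (q * c + d) := by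
  induction n with
  | zero => simp
  | succ n ih =>
    rw [Nat.succ_mul, Finset.sum_range_add, ih, Finset.sum_range_succ, Nat.mul_comm q n]

lemma sum_pow_pred {β : ℂ} (h1 : β ≠ 1) {m : ℕ} (hm : 1 ≤ m) (hβ : β ^ m = 1) :
    ∑ c ∈ Finset.range (m - 1), β ^ c = -β ^ (m - 1) := by
  have h := geom_sum_zero h1 hβ
  rw [show m = (m - 1) + 1 by omega, Finset.sum_range_succ] at h
  exact eq_neg_of_add_eq_zero_left h

lemma sum_pow_succ_pred {β : ℂ} (h1 : β ≠ 1) {m : ℕ} (hm : 1 ≤ m) (hβ : β ^ m = 1) :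
    ∑ c ∈ Finset.range (m - 1), β ^ (c + 1) = -1 := by
  have : ∑ c ∈ Finset.range (m - 1), β ^ (c + 1)
      = β * ∑ c ∈ Finset.range (m - 1), β ^ c := by
    rw [Finset.mul_sum]
    exact Finset.sum_congr rfl fun c _ => pow_succ' β c
  rw [this, sum_pow_pred h1 hm hβ, mul_neg, ← pow_succ', show m - 1 + 1 = m by omega, hβ]

noncomputable def Wmat {p k : ℕ} (ζ : Fin (p ^ k).totient → ℂ) :
    Matrix (Fin (p ^ k).totient) (Fin (p ^ k).totient) ℂ :=
  Matrix.of fun b a =>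
    (1 - ζ a ^ (p ^ (k - 1) * ((b : ℕ) / p ^ (k - 1) + 1))) * ((ζ a)⁻¹) ^ (b : ℕ)
      / ((p : ℂ) ^ k)

section Single

variable {p k : ℕ} {ζ : Fin (p ^ k).totient → ℂ}

lemma vmat_mul_wmat (hp : p.Prime) (hk : 1 ≤ k)
    (hζ : ∀ a, IsPrimitiveRoot (ζ a) (p ^ k)) (hζinj : Function.Injective ζ) :
    (Matrix.of fun a b : Fin (p ^ k).totient => ζ a ^ (b : ℕ)) * Wmat ζ = 1 := by
  have hN0 : p ^ k ≠ 0 := pow_ne_zero _ hp.ne_zero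
  have hq0 : 0 < p ^ (k - 1) := pow_pos hp.pos _
  have hp2 : 2 ≤ p := hp.two_le
  have hqk : p ^ (k - 1) < p ^ k := Nat.pow_lt_pow_right hp.one_lt (by omega)
  have ht : (p ^ k).totient = (p - 1) * p ^ (k - 1) := by
    rw [Nat.totient_prime_pow hp (by omega)]; ring
  have hCN0 : ((p : ℂ) ^ k) ≠ 0 := pow_ne_zero _ (Nat.cast_ne_zero.2 hp.ne_zero)
  ext a a'
  rw [Matrix.mul_apply]
  set q := p ^ (k - 1) with hqdef
  set μ := ζ a' with hμdef
  have hμ0 : μ ≠ 0 := (hζ a').ne_zero hN0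
  have hζa0 : ζ a ≠ 0 := (hζ a).ne_zero hN0
  set ω := ζ a * μ⁻¹ with hωdef
  have key : ∀ b : Fin (p ^ k).totient,
      (Matrix.of fun a b : Fin (p ^ k).totient => ζ a ^ (b : ℕ)) a b * Wmat ζ b a'
      = (fun m : ℕ => ω ^ m * (1 - μ ^ (q * (m / q + 1))) / ((p : ℂ) ^ k)) (b : ℕ) := by
    intro b
    simp only [Wmat, Matrix.of_apply, hωdef]
    rw [mul_pow]
    ring
  rw [Finset.sum_congr rfl fun b _ => key b,
    Fin.sum_univ_eq_sum_range (fun m : ℕ => ω ^ m * (1 - μ ^ (q * (m / q + 1))) / ((p : ℂ) ^ k))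
      ((p ^ k).totient),
    show Finset.range ((p ^ k).totient) = Finset.range ((p - 1) * q) from by rw [ht],
    sum_range_mul' _ (p - 1) q]
  have hdiv : ∀ c, ∀ d ∈ Finset.range q, (q * c + d) / q + 1 = c + 1 := by
    intro c d hd
    rw [Nat.mul_add_div hq0, Nat.div_eq_of_lt (Finset.mem_range.1 hd)]
  -- reduce to A * B / N
  set α := ω ^ q with hαdef
  set β := μ ^ q with hβdef
  have hsplit : ∑ c ∈ Finset.range (p - 1), ∑ d ∈ Finset.range q,
        ω ^ (q * c + d) * (1 - μ ^ (q * ((q * c + d) / q + 1))) / ((p : ℂ) ^ k)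
      = (∑ d ∈ Finset.range q, ω ^ d)
        * (∑ c ∈ Finset.range (p - 1), (α ^ c - β * (α * β) ^ c)) / ((p : ℂ) ^ k) := by
    rw [Finset.sum_comm, Finset.sum_mul_sum, Finset.sum_div]
    refine Finset.sum_congr rfl fun d hd => ?_
    rw [Finset.sum_div]
    refine Finset.sum_congr rfl fun c _ => ?_
    rw [hdiv c d hd, hαdef, hβdef]
    ring
  rw [hsplit]
  -- basic root facts
  have hωN : ω ^ p ^ k = 1 := by
    rw [hωdef, mul_pow, (hζ a).pow_eq_one, inv_pow, (hζ a').pow_eq_one, one_mul, inv_one]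
  have hqp : q * p = p ^ k := by
    rw [hqdef, ← pow_succ]
    congr 1
    omega
  have hαp : α ^ p = 1 := by rw [hαdef, ← pow_mul, hqp, hωN]
  have hβp : β ^ p = 1 := by rw [hβdef, ← pow_mul, hqp, (hζ a').pow_eq_one]
  have hαβ : α * β = ζ a ^ q := by
    rw [hαdef, hβdef, ← mul_pow, hωdef, inv_mul_cancel_right₀ hμ0]
  have hαβ1 : α * β ≠ 1 := by
    rw [hαβ]
    exact (hζ a).pow_ne_one_of_pos_of_lt hq0.ne' hqk
  have hαβp : (α * β) ^ p = 1 := by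
    rw [hαβ, ← pow_mul, hqp, (hζ a).pow_eq_one]
  have hβ1 : β ≠ 1 := by
    rw [hβdef]
    exact (hζ a').pow_ne_one_of_pos_of_lt hq0.ne' hqk
  by_cases haa : a = a'
  · -- diagonal
    subst haa
    have hω1 : ω = 1 := by rw [hωdef, mul_inv_cancel₀ hζa0]
    have hα1 : α = 1 := by rw [hαdef, hω1, one_pow]
    have hA : ∑ d ∈ Finset.range q, ω ^ d = (q : ℂ) := by
      simp [hω1]
    have hB : ∑ c ∈ Finset.range (p - 1), (α ^ c - β * (α * β) ^ c) = (p : ℂ) := by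
      have hcc : ∀ c, α ^ c - β * (α * β) ^ c = 1 - β ^ (c + 1) := by
        intro c
        rw [hα1, one_pow, one_mul, ← pow_succ']
      rw [Finset.sum_congr rfl fun c _ => hcc c, Finset.sum_sub_distrib,
        sum_pow_succ_pred hβ1 hp.one_lt.le hβp, Finset.sum_const, Finset.card_range]
      have hc1 : ((p - 1 : ℕ) : ℂ) = (p : ℂ) - 1 := by
        push_cast [Nat.cast_sub (by omega : 1 ≤ p)]
        ring
      rw [nsmul_eq_mul, mul_one, hc1]
      ring
    rw [hA, hB, Matrix.one_apply_eq]
    rw [div_eq_one_iff_eq hCN0,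
      show ((p : ℂ)) ^ k = ((p ^ k : ℕ) : ℂ) from by push_cast; ring, ← hqp]
    push_cast
    ring
  · -- off-diagonal
    rw [Matrix.one_apply_ne haa]
    have hω1 : ω ≠ 1 := by
      intro h
      apply haa
      apply hζinj
      rw [← hμdef]
      have : ζ a * μ⁻¹ * μ = 1 * μ := by rw [← hωdef, h]
      rwa [inv_mul_cancel_right₀ hμ0, one_mul] at this
    by_cases hα1 : α = 1
    · have hA : ∑ d ∈ Finset.range q, ω ^ d = 0 := geom_sum_zero hω1 hα1
      rw [hA, zero_mul, zero_div]
    · have hB : ∑ c ∈ Finset.range (p - 1), (α ^ c - β * (α * β) ^ c) = 0 := by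
        rw [Finset.sum_sub_distrib, ← Finset.mul_sum,
          sum_pow_pred hα1 hp.one_lt.le hαp, sum_pow_pred hαβ1 hp.one_lt.le hαβp]
        have key2 : β * (α * β) ^ (p - 1) = α ^ (p - 1) * β ^ p := by
          rw [mul_pow,
            show β ^ p = β ^ (p - 1) * β from by rw [← pow_succ, Nat.sub_add_cancel hp.pos]]
          ring
        rw [mul_neg, key2, hβp]
        ring
      rw [hB, mul_zero, zero_div]

lemma normsq_one_sub {w : ℂ} (hw : ‖w‖ = 1) : ‖1 - w‖ ^ 2 = 2 - 2 * w.re := by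
  have h2 : Complex.normSq w = 1 := by
    rw [Complex.normSq_eq_norm_sq, hw]; norm_num
  have h3 : ‖1 - w‖ ^ 2 = Complex.normSq (1 - w) := by
    rw [Complex.normSq_eq_norm_sq]
  rw [h3, Complex.normSq_apply] at *
  rw [Complex.sub_re, Complex.sub_im, Complex.one_re, Complex.one_im]
  nlinarith [h2]

lemma sumsq_vand (hp : p.Prime) (hζ : ∀ a, IsPrimitiveRoot (ζ a) (p ^ k)) :
    ∑ a, ∑ b, ‖(Matrix.of fun a b : Fin (p ^ k).totient => ζ a ^ (b : ℕ)) a b‖ ^ 2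
      = ((p ^ k).totient : ℝ) ^ 2 := by
  have hN0 : p ^ k ≠ 0 := pow_ne_zero _ hp.ne_zero
  have h1 : ∀ a b : Fin (p ^ k).totient,
      ‖(Matrix.of fun a b : Fin (p ^ k).totient => ζ a ^ (b : ℕ)) a b‖ ^ 2 = 1 := by
    intro a b
    simp only [Matrix.of_apply]
    rw [norm_pow, Complex.norm_eq_one_of_pow_eq_one (hζ a).pow_eq_one hN0, one_pow, one_pow]
  simp only [h1, Finset.sum_const, Finset.card_univ, Fintype.card_fin, nsmul_eq_mul, mul_one]
  ring

lemma sumsq_wmat (hp : p.Prime) (hk : 1 ≤ k)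
    (hζ : ∀ a, IsPrimitiveRoot (ζ a) (p ^ k)) :
    ∑ b, ∑ a, ‖Wmat ζ b a‖ ^ 2 = 2 * (1 - 1 / (p : ℝ)) := by
  have hN0 : p ^ k ≠ 0 := pow_ne_zero _ hp.ne_zero
  have hq0 : 0 < p ^ (k - 1) := pow_pos hp.pos _
  have hqk : p ^ (k - 1) < p ^ k := Nat.pow_lt_pow_right hp.one_lt (by omega)
  have hp2 : 2 ≤ p := hp.two_le
  have ht : (p ^ k).totient = (p - 1) * p ^ (k - 1) := by
    rw [Nat.totient_prime_pow hp (by omega)]; ring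
  set q := p ^ (k - 1) with hqdef
  rw [Finset.sum_comm]
  have per : ∀ a : Fin (p ^ k).totient,
      ∑ b, ‖Wmat ζ b a‖ ^ 2 = (q : ℝ) * (2 * p) / ((p : ℝ) ^ k) ^ 2 := by
    intro a
    set μ := ζ a with hμdef
    set β := μ ^ q with hβdef
    have hμ1 : ‖μ‖ = 1 := Complex.norm_eq_one_of_pow_eq_one (hζ a).pow_eq_one hN0
    have hβp : β ^ p = 1 := by
      rw [hβdef, ← pow_mul, show q * p = p ^ k from by rw [hqdef, ← pow_succ]; congr 1; omega,
        (hζ a).pow_eq_one]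
    have hβ1 : β ≠ 1 := by
      rw [hβdef, hμdef]
      exact (hζ a).pow_ne_one_of_pos_of_lt hq0.ne' hqk
    have hnorm : ∀ b : Fin (p ^ k).totient, ‖Wmat ζ b a‖ ^ 2
        = (fun m : ℕ => ‖1 - μ ^ (q * (m / q + 1))‖ ^ 2 / ((p : ℝ) ^ k) ^ 2) (b : ℕ) := by
      intro b
      simp only [Wmat, Matrix.of_apply]
      rw [norm_div, norm_mul, norm_pow, norm_inv, ← hμdef, hμ1, inv_one, one_pow, mul_one,
        norm_pow, Complex.norm_natCast, div_pow]
    rw [Finset.sum_congr rfl fun b _ => hnorm b,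
      Fin.sum_univ_eq_sum_range
        (fun m : ℕ => ‖1 - μ ^ (q * (m / q + 1))‖ ^ 2 / ((p : ℝ) ^ k) ^ 2) ((p ^ k).totient),
      show Finset.range ((p ^ k).totient) = Finset.range ((p - 1) * q) from by rw [ht],
      sum_range_mul' _ (p - 1) q]
    have hdiv : ∀ c, ∀ d ∈ Finset.range q, (q * c + d) / q + 1 = c + 1 := by
      intro c d hd
      rw [Nat.mul_add_div hq0, Nat.div_eq_of_lt (Finset.mem_range.1 hd)]
    have hinner : ∀ c ∈ Finset.range (p - 1), ∑ d ∈ Finset.range q,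
        ‖1 - μ ^ (q * ((q * c + d) / q + 1))‖ ^ 2 / ((p : ℝ) ^ k) ^ 2
        = (q : ℝ) * ((2 - 2 * (β ^ (c + 1)).re) / ((p : ℝ) ^ k) ^ 2) := by
      intro c _
      rw [Finset.sum_congr rfl fun d hd => by rw [hdiv c d hd]]
      rw [Finset.sum_const, Finset.card_range, nsmul_eq_mul]
      congr 1
      rw [show μ ^ (q * (c + 1)) = β ^ (c + 1) from by rw [hβdef, ← pow_mul]]
      rw [normsq_one_sub]
      rw [norm_pow, hβdef, norm_pow, hμ1, one_pow, one_pow]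
    rw [Finset.sum_congr rfl hinner, ← Finset.mul_sum, ← Finset.sum_div,
      Finset.sum_sub_distrib, ← Finset.mul_sum, ← Complex.re_sum,
      sum_pow_succ_pred hβ1 hp.one_lt.le hβp, Finset.sum_const, Finset.card_range,
      nsmul_eq_mul]
    have hc1 : ((p - 1 : ℕ) : ℝ) = (p : ℝ) - 1 := by
      push_cast [Nat.cast_sub (by omega : 1 ≤ p)]; ring
    rw [hc1]
    simp only [Complex.neg_re, Complex.one_re]
    ring
  rw [Finset.sum_congr rfl fun a _ => per a, Finset.sum_const, Finset.card_univ,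
    Fintype.card_fin, nsmul_eq_mul]
  have hqR : ((q : ℕ) : ℝ) = (p : ℝ) ^ (k - 1) := by rw [hqdef]; push_cast; ring
  have htR : ((p ^ k).totient : ℝ) = ((p : ℝ) - 1) * (p : ℝ) ^ (k - 1) := by
    rw [ht, Nat.cast_mul, hqR, Nat.cast_sub (by omega : 1 ≤ p)]
    push_cast; ring
  have hpk : (p : ℝ) ^ k = (p : ℝ) ^ (k - 1) * p := by
    rw [← pow_succ]; congr 1; omega
  rw [htR, hqR, hpk]
  have hpR : (p : ℝ) ≠ 0 := Nat.cast_ne_zero.2 hp.ne_zero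
  have hpkR : (p : ℝ) ^ (k - 1) ≠ 0 := pow_ne_zero _ hpR
  field_simp

end Single
end TVaux

theorem condNum_twisted_vandermonde (r : ℕ) (p k : Fin r → ℕ)
    (hp : ∀ i, Nat.Prime (p i)) (hinj : Function.Injective p)
    (hk : ∀ i, 1 ≤ k i) (n : ℕ) (hn : n = ∏ i, p i ^ k i)
    (ζ : ∀ i, Fin (p i ^ k i).totient → ℂ)
    (hζ : ∀ i a, IsPrimitiveRoot (ζ i a) (p i ^ k i))
    (hζinj : ∀ i, Function.Injective (ζ i)) :
    condNum (kronProd fun i =>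
        Matrix.of fun a b : Fin (p i ^ k i).totient => ζ i a ^ (b : ℕ)) =
      (n.totient : ℝ) * Real.sqrt 2 ^ r *
        Real.sqrt (∏ i, (1 - 1 / (p i : ℝ))) := by
  set V : ∀ i, Matrix (Fin (p i ^ k i).totient) (Fin (p i ^ k i).totient) ℂ :=
    fun i => Matrix.of fun a b : Fin (p i ^ k i).totient => ζ i a ^ (b : ℕ) with hV
  set W : ∀ i, Matrix (Fin (p i ^ k i).totient) (Fin (p i ^ k i).totient) ℂ :=
    fun i => TVaux.Wmat (ζ i) with hW
  have hVW : ∀ i, V i * W i = 1 := fun i =>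
    TVaux.vmat_mul_wmat (hp i) (hk i) (hζ i) (hζinj i)
  have hone : kronProd V * kronProd W = 1 := by
    rw [TVaux.kronProd_mul,
      show (fun i => V i * W i)
        = (fun i => (1 : Matrix (Fin (p i ^ k i).totient) (Fin (p i ^ k i).totient) ℂ))
        from funext hVW]
    exact TVaux.kronProd_one
  have hinv : (kronProd V)⁻¹ = kronProd W := Matrix.inv_eq_right_inv hone
  unfold condNum frobNorm
  rw [hinv, TVaux.sumsq_kron, TVaux.sumsq_kron]
  rw [show (∏ i, ∑ a, ∑ b, ‖V i a b‖ ^ 2) = ∏ i, ((p i ^ k i).totient : ℝ) ^ 2 from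
    Finset.prod_congr rfl fun i _ => TVaux.sumsq_vand (hp i) (hζ i)]
  rw [show (∏ i, ∑ a, ∑ b, ‖W i a b‖ ^ 2) = ∏ i, (2 * (1 - 1 / (p i : ℝ))) from
    Finset.prod_congr rfl fun i _ => TVaux.sumsq_wmat (hp i) (hk i) (hζ i)]
  have hnt : (n.totient : ℝ) = ∏ i, ((p i ^ k i).totient : ℝ) := by
    rw [hn, TVaux.totient_prod Finset.univ (fun i => p i ^ k i)
      (fun i _ j _ hij => Nat.Coprime.pow _ _
        ((Nat.coprime_primes (hp i) (hp j)).2 fun he => hij (hinj he))),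
      Nat.cast_prod]
  have h1p : ∀ i, (0 : ℝ) ≤ 1 - 1 / (p i : ℝ) := by
    intro i
    have h1 : (1 : ℝ) ≤ (p i : ℝ) := by exact_mod_cast (hp i).one_lt.le
    have : 1 / (p i : ℝ) ≤ 1 := by
      rw [div_le_one (by linarith)]; exact h1
    linarith
  have hC : (0 : ℝ) ≤ ∏ i, (1 - 1 / (p i : ℝ)) :=
    Finset.prod_nonneg fun i _ => h1p i
  have hA : (0 : ℝ) ≤ ∏ i, ((p i ^ k i).totient : ℝ) ^ 2 :=
    Finset.prod_nonneg fun i _ => sq_nonneg _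
  rw [← Real.sqrt_mul hA]
  have hRHS : (n.totient : ℝ) * Real.sqrt 2 ^ r * Real.sqrt (∏ i, (1 - 1 / (p i : ℝ)))
      = Real.sqrt ((n.totient : ℝ) ^ 2 * 2 ^ r * ∏ i, (1 - 1 / (p i : ℝ))) := by
    rw [TVaux.sqrt_pow'' 2 (by norm_num) r,
      show (n.totient : ℝ) = Real.sqrt ((n.totient : ℝ) ^ 2) from
        (Real.sqrt_sq (by positivity)).symm,
      ← Real.sqrt_mul (by positivity), ← Real.sqrt_mul (by positivity)]
    rw [Real.sqrt_sq (by positivity)]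
  rw [hRHS]
  congr 1
  rw [Finset.prod_mul_distrib, Finset.prod_pow, Finset.prod_const, Finset.card_univ,
    Fintype.card_fin, hnt]
  ring
end

section
/- Let n ≥ e^e be an integer, let p_1, …, p_r be distinct primes none of which divides n, and let TV_K := TV_{K_n} ⊗ V_{p_1} ⊗ ⋯ ⊗ V_{p_r}. Then Cond(TV_K) ≤ φ(n) · n^{0.2076} · ∏_{i=1}^r (2 + √p_i). -/
open scoped Kronecker

/-- The matrix `V_p`: `[[1, √p],[1, −√p]]` if `p ≡ 2, 3 (mod 4)`, and
`[[1, (1+√p)/2],[1, (1−√p)/2]]` if `p ≡ 1 (mod 4)`. -/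
noncomputable def Vp (p : ℕ) : Matrix (Fin 2) (Fin 2) ℝ :=
  if p % 4 = 1 then
    !![1, (1 + Real.sqrt p) / 2; 1, (1 - Real.sqrt p) / 2]
  else
    !![1, Real.sqrt p; 1, -Real.sqrt p]

lemma frobNorm_nonneg {m n : Type*} [Fintype m] [Fintype n] (A : Matrix m n ℂ) :
    0 ≤ frobNorm A := Real.sqrt_nonneg _

lemma condNum_nonneg {n : Type*} [Fintype n] [DecidableEq n] (A : Matrix n n ℂ) :
    0 ≤ condNum A := mul_nonneg (frobNorm_nonneg _) (frobNorm_nonneg _)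

lemma sqrt_prod {ι : Type*} (s : Finset ι) (f : ι → ℝ) (h : ∀ i ∈ s, 0 ≤ f i) :
    Real.sqrt (∏ i ∈ s, f i) = ∏ i ∈ s, Real.sqrt (f i) := by
  classical
  induction s using Finset.cons_induction with
  | empty => simp
  | cons a s ha ih =>
    rw [Finset.prod_cons, Finset.prod_cons, Real.sqrt_mul (h a (Finset.mem_cons_self a s)),
      ih fun i hi => h i (Finset.mem_cons_of_mem hi)]

lemma frobNorm_kronecker {l m n p : Type*} [Fintype l] [Fintype m] [Fintype n] [Fintype p]
    (A : Matrix l m ℂ) (B : Matrix n p ℂ) :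
    frobNorm (A ⊗ₖ B) = frobNorm A * frobNorm B := by
  unfold frobNorm
  rw [← Real.sqrt_mul (by positivity)]
  congr 1
  calc (∑ ik : l × n, ∑ jl : m × p, ‖(A ⊗ₖ B) ik jl‖ ^ 2)
      = ∑ ik : l × n, (∑ j, ‖A ik.1 j‖ ^ 2) * (∑ o, ‖B ik.2 o‖ ^ 2) := by
        refine Finset.sum_congr rfl fun ik _ => ?_
        rw [Finset.sum_mul_sum, Fintype.sum_prod_type]
        refine Finset.sum_congr rfl fun j _ => Finset.sum_congr rfl fun o _ => ?_
        simp [Matrix.kroneckerMap_apply, norm_mul, mul_pow]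
    _ = (∑ i, ∑ j, ‖A i j‖ ^ 2) * ∑ i, ∑ j, ‖B i j‖ ^ 2 := by
        rw [Finset.sum_mul_sum, Fintype.sum_prod_type]

lemma condNum_kronecker {m n : Type*} [Fintype m] [Fintype n] [DecidableEq m] [DecidableEq n]
    (A : Matrix m m ℂ) (B : Matrix n n ℂ) :
    condNum (A ⊗ₖ B) = condNum A * condNum B := by
  unfold condNum
  rw [Matrix.inv_kronecker, frobNorm_kronecker, frobNorm_kronecker]
  ring

lemma kronProd_mul {r : ℕ} {t : Fin r → ℕ}
    (V W : ∀ i, Matrix (Fin (t i)) (Fin (t i)) ℂ) :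
    kronProd V * kronProd W = kronProd (fun i => V i * W i) := by
  ext f g
  simp only [kronProd, Matrix.mul_apply, Matrix.of_apply]
  rw [Finset.prod_univ_sum]
  rw [← Fintype.piFinset_univ]
  congr 1; ext h
  rw [← Finset.prod_mul_distrib]

lemma kronProd_one {r : ℕ} {t : Fin r → ℕ} :
    kronProd (fun i => (1 : Matrix (Fin (t i)) (Fin (t i)) ℂ)) = 1 := by
  ext f g
  simp only [kronProd, Matrix.of_apply]
  by_cases h : f = g
  · subst h; simp [Matrix.one_apply]
  · have : ∃ i, f i ≠ g i := by
      by_contra hc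
      push_neg at hc
      exact h (funext hc)
    obtain ⟨i, hi⟩ := this
    rw [Matrix.one_apply_ne h]
    exact Finset.prod_eq_zero (Finset.mem_univ i) (Matrix.one_apply_ne hi)

lemma kronProd_inv {r : ℕ} {t : Fin r → ℕ}
    (V W : ∀ i, Matrix (Fin (t i)) (Fin (t i)) ℂ) (h : ∀ i, W i * V i = 1) :
    (kronProd V)⁻¹ = kronProd W := by
  apply Matrix.inv_eq_left_inv
  rw [kronProd_mul]
  rw [show (fun i => W i * V i) = fun i => (1 : Matrix (Fin (t i)) (Fin (t i)) ℂ) by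
    ext i : 1; exact h i]
  exact kronProd_one

lemma frobNorm_kronProd {r : ℕ} {t : Fin r → ℕ}
    (V : ∀ i, Matrix (Fin (t i)) (Fin (t i)) ℂ) :
    frobNorm (kronProd V) = ∏ i, frobNorm (V i) := by
  unfold frobNorm kronProd
  rw [← sqrt_prod _ _ (fun i _ => by positivity)]
  congr 1
  have key : ∀ f : ∀ i, Fin (t i), (∑ g : ∀ i, Fin (t i), ∏ i, ‖V i (f i) (g i)‖ ^ 2)
      = ∏ i, ∑ b, ‖V i (f i) b‖ ^ 2 := by
    intro f
    rw [Finset.prod_univ_sum, ← Fintype.piFinset_univ]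
  calc (∑ f : ∀ i, Fin (t i), ∑ g : ∀ i, Fin (t i), ‖Matrix.of
        (fun f g => ∏ i, V i (f i) (g i)) f g‖ ^ 2)
      = ∑ f : ∀ i, Fin (t i), ∏ i, ∑ b, ‖V i (f i) b‖ ^ 2 := by
        apply Finset.sum_congr rfl
        intro f _
        rw [← key f]
        apply Finset.sum_congr rfl
        intro g _
        simp only [Matrix.of_apply]
        rw [norm_prod, ← Finset.prod_pow]
    _ = ∏ i, ∑ a, ∑ b, ‖V i a b‖ ^ 2 := by
        rw [Finset.prod_univ_sum, ← Fintype.piFinset_univ]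

lemma condNum_kronProd {r : ℕ} {t : Fin r → ℕ}
    (V W : ∀ i, Matrix (Fin (t i)) (Fin (t i)) ℂ) (h : ∀ i, W i * V i = 1) :
    condNum (kronProd V) = ∏ i, frobNorm (V i) * frobNorm (W i) := by
  unfold condNum
  rw [kronProd_inv V W h, frobNorm_kronProd, frobNorm_kronProd, ← Finset.prod_mul_distrib]


open Polynomial

lemma nthRootsFinset_eq_image {M : ℕ} (hM : 0 < M) {η : ℂ} (hη : IsPrimitiveRoot η M) :
    nthRootsFinset M (1 : ℂ) = (Finset.range M).image (η ^ ·) := by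
  symm
  apply Finset.eq_of_subset_of_card_le
  · intro z hz
    simp only [Finset.mem_image, Finset.mem_range] at hz
    obtain ⟨i, _, rfl⟩ := hz
    rw [mem_nthRootsFinset hM, ← pow_mul, mul_comm, pow_mul, hη.pow_eq_one, one_pow]
  · rw [hη.card_nthRootsFinset, Finset.card_image_of_injOn, Finset.card_range]
    intro i hi j hj hij
    exact hη.pow_inj (Finset.mem_range.1 hi) (Finset.mem_range.1 hj) hij

lemma sum_pow_nthRoots {M : ℕ} (hM : 0 < M) (d : ℕ) :
    ∑ z ∈ nthRootsFinset M (1 : ℂ), z ^ d = if M ∣ d then (M : ℂ) else 0 := by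
  obtain ⟨η, hη⟩ : ∃ η : ℂ, IsPrimitiveRoot η M :=
    ⟨_, Complex.isPrimitiveRoot_exp M hM.ne'⟩
  rw [nthRootsFinset_eq_image hM hη, Finset.sum_image
    (fun i hi j hj hij => hη.pow_inj (Finset.mem_range.1 hi) (Finset.mem_range.1 hj) hij)]
  have : ∀ i, (η ^ i) ^ d = (η ^ d) ^ i := fun i => by
    rw [← pow_mul, mul_comm, pow_mul]
  simp only [this]
  by_cases h : M ∣ d
  · rw [if_pos h, (hη.pow_eq_one_iff_dvd d).2 h]
    simp
  · rw [if_neg h]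
    have hne : η ^ d - 1 ≠ 0 := by
      rw [sub_ne_zero]
      exact fun hc => h ((hη.pow_eq_one_iff_dvd d).1 hc)
    have := geom_sum_mul (η ^ d) M
    rw [← pow_mul, mul_comm d M, pow_mul, hη.pow_eq_one, one_pow, sub_self] at this
    exact (mul_eq_zero.1 this).resolve_right hne

lemma primitiveRoots_prime_pow {Q K : ℕ} (hQ : Q.Prime) (hK : 1 ≤ K) :
    primitiveRoots (Q ^ K) ℂ =
      nthRootsFinset (Q ^ K) (1 : ℂ) \ nthRootsFinset (Q ^ (K - 1)) (1 : ℂ) := by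
  have hQK : 0 < Q ^ K := pow_pos hQ.pos _
  have hQK' : 0 < Q ^ (K - 1) := pow_pos hQ.pos _
  ext z
  rw [Finset.mem_sdiff, mem_primitiveRoots hQK, mem_nthRootsFinset hQK, mem_nthRootsFinset hQK']
  constructor
  · intro h
    refine ⟨h.pow_eq_one, fun hc => ?_⟩
    have := (h.pow_eq_one_iff_dvd _).1 hc
    exact absurd (Nat.pow_dvd_pow_iff_le_right hQ.one_lt |>.1 this) (by omega)
  · rintro ⟨h1, h2⟩
    have horder : orderOf z ∣ Q ^ K := orderOf_dvd_of_pow_eq_one h1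
    obtain ⟨j, hj, hord⟩ := (Nat.dvd_prime_pow hQ).1 horder
    have hjK : j = K := by
      by_contra hc
      have : orderOf z ∣ Q ^ (K - 1) := hord ▸ pow_dvd_pow Q (by omega)
      exact h2 (orderOf_dvd_iff_pow_eq_one.1 this)
    have : orderOf z = Q ^ K := by rw [hord, hjK]
    exact this ▸ IsPrimitiveRoot.orderOf z


lemma dvd_helper1 {N l m : ℕ} (hl : l < N) (hm : m < N) :
    N ∣ (N - l + m) ↔ l = m := by
  constructor
  · intro h
    obtain ⟨c, hc⟩ := h
    have h1 : 0 < N - l + m := by omega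
    have h2 : N - l + m < 2 * N := by omega
    have hc1 : 0 < c := by
      rcases Nat.eq_zero_or_pos c with h | h
      · simp [h] at hc; omega
      · exact h
    have hc2 : c < 2 := by
      by_contra hcon
      push_neg at hcon
      have : 2 * N ≤ N * c := by calc 2 * N = N * 2 := by ring
                                   _ ≤ N * c := Nat.mul_le_mul_left N hcon
      omega
    interval_cases c <;> omega
  · rintro rfl
    exact ⟨1, by omega⟩

lemma dvd_helper2 {q' N l m : ℕ} (hq'N : q' ∣ N) (hl : l ≤ N) :
    q' ∣ (N - l + m) ↔ l % q' = m % q' := by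
  have key : ((N - l + m : ℕ) : ℤ) = (m : ℤ) - l + N := by
    have : ((N - l : ℕ) : ℤ) = (N : ℤ) - l := by
      exact_mod_cast Int.ofNat_sub hl
    push_cast [this]; ring
  rw [← Int.natCast_dvd_natCast, key]
  have hdN : (q' : ℤ) ∣ (N : ℤ) := Int.natCast_dvd_natCast.2 hq'N
  constructor
  · intro h
    have : (q' : ℤ) ∣ (m : ℤ) - l := by
      have := dvd_sub h hdN
      simpa using this
    exact Nat.modEq_iff_dvd.2 this
  · intro h
    have : (q' : ℤ) ∣ (m : ℤ) - l := Nat.modEq_iff_dvd.1 h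
    exact dvd_add this hdN

lemma filter_mod_eq_image {q' w c : ℕ} (hq' : 0 < q') (hc : c < q') :
    (Finset.range (q' * w)).filter (fun x => x % q' = c) =
      (Finset.range w).image (fun i => q' * i + c) := by
  ext x
  simp only [Finset.mem_filter, Finset.mem_range, Finset.mem_image]
  constructor
  · rintro ⟨hx, hmod⟩
    refine ⟨x / q', ?_, ?_⟩
    · exact Nat.div_lt_of_lt_mul (by omega)
    · have := Nat.div_add_mod x q'
      omega
  · rintro ⟨i, hi, rfl⟩
    constructor
    · have h2 : q' * (i + 1) = q' * i + q' := by ring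
      have : q' * i + c < q' * (i + 1) := by omega
      calc q' * i + c < q' * (i + 1) := this
        _ ≤ q' * w := Nat.mul_le_mul_left q' hi
    · rw [Nat.mul_add_mod]
      exact Nat.mod_eq_of_lt hc

lemma sum_indicator_mod {q' w c : ℕ} (hq' : 0 < q') (hc : c < q') :
    ∑ x ∈ Finset.range (q' * w), (if x % q' = c then (1:ℂ) else 0) = w := by
  rw [Finset.sum_boole, filter_mod_eq_image hq' hc,
    Finset.card_image_of_injective _
      (fun i j h => Nat.eq_of_mul_eq_mul_left hq' (Nat.add_right_cancel h)),
    Finset.card_range]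

open scoped Matrix

open Polynomial in
lemma sum_fin_primroots {N : ℕ} (hN : 0 < N) (ζ : Fin N.totient → ℂ)
    (hζ : ∀ a, IsPrimitiveRoot (ζ a) N) (hinj : Function.Injective ζ) (f : ℂ → ℂ) :
    ∑ a, f (ζ a) = ∑ z ∈ primitiveRoots N ℂ, f z := by
  have himg : Finset.image ζ Finset.univ = primitiveRoots N ℂ := by
    apply Finset.eq_of_subset_of_card_le
    · intro z hz
      simp only [Finset.mem_image, Finset.mem_univ, true_and] at hz
      obtain ⟨a, rfl⟩ := hz
      exact (mem_primitiveRoots hN).2 (hζ a)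
    · rw [Finset.card_image_of_injective _ hinj, Finset.card_univ, Fintype.card_fin,
        Complex.card_primitiveRoots]
  rw [← himg, Finset.sum_image (fun a _ b _ h => hinj h)]

open Polynomial in
lemma sum_pow_primitiveRoots {Q K : ℕ} (hQ : Q.Prime) (hK : 1 ≤ K) (d : ℕ) :
    ∑ z ∈ primitiveRoots (Q ^ K) ℂ, z ^ d =
      (if Q ^ K ∣ d then ((Q ^ K : ℕ) : ℂ) else 0) -
        (if Q ^ (K - 1) ∣ d then ((Q ^ (K - 1) : ℕ) : ℂ) else 0) := by
  have hsub : nthRootsFinset (Q ^ (K - 1)) (1 : ℂ) ⊆ nthRootsFinset (Q ^ K) (1 : ℂ) := by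
    intro z hz
    rw [mem_nthRootsFinset (pow_pos hQ.pos _)] at hz ⊢
    obtain ⟨c, hc⟩ : Q ^ (K - 1) ∣ Q ^ K := pow_dvd_pow Q (by omega)
    rw [hc, pow_mul, hz, one_pow]
  rw [primitiveRoots_prime_pow hQ hK, Finset.sum_sdiff_eq_sub hsub,
    sum_pow_nthRoots (pow_pos hQ.pos _) d, sum_pow_nthRoots (pow_pos hQ.pos _) d]

section Cyclo

variable {Q K : ℕ} (ζ : Fin (Q ^ K).totient → ℂ)

noncomputable def Vmat : Matrix (Fin (Q ^ K).totient) (Fin (Q ^ K).totient) ℂ :=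
  Matrix.of fun a b => ζ a ^ (b : ℕ)

noncomputable def Emat (Q K : ℕ) : Matrix (Fin (Q ^ K).totient) (Fin (Q ^ K).totient) ℂ :=
  Matrix.of fun l m => if (l : ℕ) % Q ^ (K - 1) = (m : ℕ) % Q ^ (K - 1) then 1 else 0

lemma gram (hQ : Q.Prime) (hK : 1 ≤ K) (hζ : ∀ a, IsPrimitiveRoot (ζ a) (Q ^ K))
    (hinj : Function.Injective ζ) :
    (Vmat ζ)ᴴ * Vmat ζ =
      ((Q ^ (K - 1) : ℕ) : ℂ) • (((Q : ℕ) : ℂ) • 1 - Emat Q K) := by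
  have hN1 : 1 < Q ^ K := Nat.one_lt_pow (by omega) hQ.one_lt
  have htlt : (Q ^ K).totient < Q ^ K := Nat.totient_lt _ hN1
  ext l m
  have hl : (l : ℕ) < Q ^ K := lt_trans l.isLt htlt
  have hm : (m : ℕ) < Q ^ K := lt_trans m.isLt htlt
  have entry : ((Vmat ζ)ᴴ * Vmat ζ) l m =
      ∑ a, ζ a ^ (Q ^ K - (l : ℕ) + (m : ℕ)) := by
    rw [Matrix.mul_apply]
    refine Finset.sum_congr rfl fun a _ => ?_
    simp only [Matrix.conjTranspose_apply, Vmat, Matrix.of_apply]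
    have hnorm : ‖ζ a ^ (l : ℕ)‖ = 1 := by
      rw [norm_pow,
        Complex.norm_eq_one_of_pow_eq_one (hζ a).pow_eq_one (by positivity), one_pow]
    have h1 : ζ a ^ (l : ℕ) * ζ a ^ (Q ^ K - (l : ℕ)) = 1 := by
      rw [← pow_add, Nat.add_sub_cancel' hl.le, (hζ a).pow_eq_one]
    have h2 : star (ζ a ^ (l : ℕ)) = ζ a ^ (Q ^ K - (l : ℕ)) := by
      have hic := Complex.inv_eq_conj hnorm
      rw [inv_eq_of_mul_eq_one_right h1] at hic
      exact hic.symm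
    rw [h2, ← pow_add]
  rw [entry, sum_fin_primroots (by positivity) ζ hζ hinj (fun z => z ^ (Q ^ K - (l : ℕ) + (m : ℕ))),
    sum_pow_primitiveRoots hQ hK]
  have hdvd1 : Q ^ K ∣ (Q ^ K - (l : ℕ) + (m : ℕ)) ↔ l = m := by
    rw [dvd_helper1 hl hm, Fin.val_inj]
  have hdvd2 : Q ^ (K - 1) ∣ (Q ^ K - (l : ℕ) + (m : ℕ)) ↔
      (l : ℕ) % Q ^ (K - 1) = (m : ℕ) % Q ^ (K - 1) :=
    dvd_helper2 (pow_dvd_pow Q (by omega)) hl.le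
  simp only [hdvd1, hdvd2, Matrix.smul_apply, Matrix.sub_apply, Matrix.one_apply, Emat,
    Matrix.of_apply, smul_eq_mul]
  have hQK : ((Q ^ K : ℕ) : ℂ) = ((Q ^ (K - 1) : ℕ) : ℂ) * ((Q : ℕ) : ℂ) := by
    push_cast
    rw [← pow_succ]
    congr 1
    omega
  by_cases h1 : l = m
  · subst h1
    simp only [if_true]
    rw [hQK]
    ring
  · by_cases h2 : (l : ℕ) % Q ^ (K - 1) = (m : ℕ) % Q ^ (K - 1)
    · simp only [if_pos h2, if_neg h1]
      ring
    · simp only [if_neg h2, if_neg h1]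
      ring

lemma Emat_herm : (Emat Q K)ᴴ = Emat Q K := by
  ext l m
  simp only [Matrix.conjTranspose_apply, Emat, Matrix.of_apply]
  by_cases h : (l : ℕ) % Q ^ (K - 1) = (m : ℕ) % Q ^ (K - 1)
  · rw [if_pos h.symm, if_pos h]
    simp
  · rw [if_neg (fun hc => h hc.symm), if_neg h]
    simp

lemma Emat_sq (hQ : Q.Prime) (hK : 1 ≤ K) :
    Emat Q K * Emat Q K = (((Q : ℕ) : ℂ) - 1) • Emat Q K := by
  have hq' : 0 < Q ^ (K - 1) := pow_pos hQ.pos _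
  have ht : (Q ^ K).totient = Q ^ (K - 1) * (Q - 1) :=
    Nat.totient_prime_pow hQ (by omega)
  ext l m
  rw [Matrix.mul_apply]
  simp only [Emat, Matrix.of_apply, Matrix.smul_apply, smul_eq_mul]
  by_cases h : (l : ℕ) % Q ^ (K - 1) = (m : ℕ) % Q ^ (K - 1)
  · rw [if_pos h]
    have step : ∀ h' : Fin (Q ^ K).totient,
        (if (l : ℕ) % Q ^ (K - 1) = (h' : ℕ) % Q ^ (K - 1) then (1:ℂ) else 0) *
          (if (h' : ℕ) % Q ^ (K - 1) = (m : ℕ) % Q ^ (K - 1) then (1:ℂ) else 0) =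
        (if (h' : ℕ) % Q ^ (K - 1) = (m : ℕ) % Q ^ (K - 1) then (1:ℂ) else 0) := by
      intro h'
      by_cases hh : (h' : ℕ) % Q ^ (K - 1) = (m : ℕ) % Q ^ (K - 1)
      · rw [if_pos hh, if_pos (h.trans hh.symm), one_mul]
      · rw [if_neg hh, mul_zero]
    rw [Finset.sum_congr rfl fun h' _ => step h']
    have := sum_indicator_mod (q' := Q ^ (K - 1)) (w := Q - 1) (c := (m : ℕ) % Q ^ (K - 1))
      hq' (Nat.mod_lt _ hq')
    have hrange : Finset.range ((Q ^ K).totient) = Finset.range (Q ^ (K - 1) * (Q - 1)) := by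
      rw [ht]
    rw [Fin.sum_univ_eq_sum_range
      (fun x => if x % Q ^ (K - 1) = (m : ℕ) % Q ^ (K - 1) then (1:ℂ) else 0)
      ((Q ^ K).totient), hrange, this, mul_one, Nat.cast_sub hQ.one_le, Nat.cast_one]
  · rw [if_neg h, mul_zero]
    apply Finset.sum_eq_zero
    intro h' _
    by_cases h1 : (l : ℕ) % Q ^ (K - 1) = (h' : ℕ) % Q ^ (K - 1)
    · rw [if_pos h1]
      rw [if_neg (fun hc => h (h1.trans hc)), mul_zero]
    · rw [if_neg h1, zero_mul]

lemma key_prod (hQ : Q.Prime) (hK : 1 ≤ K) :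
    (1 + Emat Q K) * (((Q : ℕ) : ℂ) • 1 - Emat Q K) = ((Q : ℕ) : ℂ) • 1 := by
  rw [mul_sub, Matrix.mul_smul, mul_one, add_mul, one_mul, Emat_sq hQ hK, sub_smul, one_smul,
    smul_add]
  abel

noncomputable def Wmat : Matrix (Fin (Q ^ K).totient) (Fin (Q ^ K).totient) ℂ :=
  (((Q ^ K : ℕ) : ℂ))⁻¹ • ((1 + Emat Q K) * (Vmat ζ)ᴴ)

lemma WV (hQ : Q.Prime) (hK : 1 ≤ K) (hζ : ∀ a, IsPrimitiveRoot (ζ a) (Q ^ K))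
    (hinj : Function.Injective ζ) : Wmat ζ * Vmat ζ = 1 := by
  have hNne : ((Q ^ K : ℕ) : ℂ) ≠ 0 := by
    exact_mod_cast (pow_pos hQ.pos K).ne'
  have hQK : ((Q ^ K : ℕ) : ℂ) = ((Q ^ (K - 1) : ℕ) : ℂ) * ((Q : ℕ) : ℂ) := by
    push_cast
    rw [← pow_succ]
    congr 1
    omega
  unfold Wmat
  rw [Matrix.smul_mul, mul_assoc, gram ζ hQ hK hζ hinj, Matrix.mul_smul, key_prod hQ hK,
    smul_smul, smul_smul]
  have hone : ((Q ^ K : ℕ) : ℂ)⁻¹ * ((Q ^ (K - 1) : ℕ) : ℂ) * ((Q : ℕ) : ℂ) = 1 := by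
    rw [mul_assoc, ← hQK, inv_mul_cancel₀ hNne]
  rw [hone, one_smul]

lemma WWH (hQ : Q.Prime) (hK : 1 ≤ K) (hζ : ∀ a, IsPrimitiveRoot (ζ a) (Q ^ K))
    (hinj : Function.Injective ζ) :
    Wmat ζ * (Wmat ζ)ᴴ = (((Q ^ K : ℕ) : ℂ))⁻¹ • (1 + Emat Q K) := by
  have hNne : ((Q ^ K : ℕ) : ℂ) ≠ 0 := by
    exact_mod_cast (pow_pos hQ.pos K).ne'
  have hQK : ((Q ^ K : ℕ) : ℂ) = ((Q ^ (K - 1) : ℕ) : ℂ) * ((Q : ℕ) : ℂ) := by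
    push_cast
    rw [← pow_succ]
    congr 1
    omega
  have hWH : (Wmat ζ)ᴴ = (((Q ^ K : ℕ) : ℂ))⁻¹ • (Vmat ζ * (1 + Emat Q K)) := by
    unfold Wmat
    rw [Matrix.conjTranspose_smul, Matrix.conjTranspose_mul,
      Matrix.conjTranspose_conjTranspose, Matrix.conjTranspose_add,
      Matrix.conjTranspose_one, Emat_herm]
    congr 1
    simp
  rw [hWH]
  unfold Wmat
  rw [Matrix.smul_mul, Matrix.mul_smul, smul_smul, mul_assoc, ← mul_assoc (Vmat ζ)ᴴ,
    gram ζ hQ hK hζ hinj]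
  rw [Matrix.smul_mul, Matrix.mul_smul, ← mul_assoc, key_prod hQ hK, Matrix.smul_mul, one_mul]
  rw [smul_smul, smul_smul]
  congr 1
  rw [hQK]
  field_simp
end Cyclo

section Cyclo2

open scoped Matrix

variable {Q K : ℕ} (ζ : Fin (Q ^ K).totient → ℂ)

lemma frob_V (hζ : ∀ a, IsPrimitiveRoot (ζ a) (Q ^ K)) (hQ : Q.Prime) (hK : 1 ≤ K) :
    frobNorm (Vmat ζ) = ((Q ^ K).totient : ℝ) := by
  unfold frobNorm
  have hsum : (∑ a : Fin (Q ^ K).totient, ∑ b : Fin (Q ^ K).totient, ‖Vmat ζ a b‖ ^ 2)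
      = ((Q ^ K).totient : ℝ) * ((Q ^ K).totient : ℝ) := by
    have hone : ∀ a b : Fin (Q ^ K).totient, ‖Vmat ζ a b‖ ^ 2 = 1 := by
      intro a b
      simp only [Vmat, Matrix.of_apply, norm_pow]
      rw [Complex.norm_eq_one_of_pow_eq_one (hζ a).pow_eq_one (pow_pos hQ.pos K).ne',
        one_pow, one_pow]
    rw [Finset.sum_congr rfl fun a _ => Finset.sum_congr rfl fun b _ => hone a b]
    simp [Finset.card_univ, mul_comm]
  rw [hsum, Real.sqrt_mul_self (Nat.cast_nonneg _)]

lemma frob_W (hQ : Q.Prime) (hK : 1 ≤ K) (hζ : ∀ a, IsPrimitiveRoot (ζ a) (Q ^ K))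
    (hinj : Function.Injective ζ) :
    frobNorm (Wmat ζ) =
      Real.sqrt (2 * ((Q ^ K).totient : ℝ) / ((Q ^ K : ℕ) : ℝ)) := by
  unfold frobNorm
  congr 1
  have h1 : ((∑ l, ∑ a, ‖Wmat ζ l a‖ ^ 2 : ℝ) : ℂ) = (Wmat ζ * (Wmat ζ)ᴴ).trace := by
    rw [Matrix.trace]
    push_cast
    refine Finset.sum_congr rfl fun l _ => ?_
    rw [Matrix.diag_apply, Matrix.mul_apply]
    refine Finset.sum_congr rfl fun a _ => ?_
    rw [Matrix.conjTranspose_apply,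
      show star (Wmat ζ l a) = (starRingEnd ℂ) (Wmat ζ l a) from rfl,
      Complex.mul_conj, Complex.normSq_eq_norm_sq]
    push_cast
    ring
  have h2 : (Wmat ζ * (Wmat ζ)ᴴ).trace =
      ((2 * ((Q ^ K).totient : ℝ) / ((Q ^ K : ℕ) : ℝ) : ℝ) : ℂ) := by
    rw [WWH ζ hQ hK hζ hinj, Matrix.trace_smul, Matrix.trace_add, Matrix.trace_one]
    have htE : (Emat Q K).trace = ((Q ^ K).totient : ℂ) := by
      simp [Matrix.trace, Matrix.diag, Emat, Finset.card_univ]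
    rw [htE]
    have hNne : ((Q ^ K : ℕ) : ℝ) ≠ 0 := by
      exact_mod_cast (pow_pos hQ.pos K).ne'
    simp only [Fintype.card_fin, smul_eq_mul]
    push_cast
    field_simp
    ring
  have h := h1.trans h2
  exact_mod_cast h

lemma rpow_aux (x c : ℝ) (hx : 1 ≤ x) (hc : 0 ≤ c) (h : c ^ (1250 : ℕ) ≤ x ^ (519 : ℕ)) :
    c ≤ x ^ (0.4152 : ℝ) := by
  have hx0 : (0 : ℝ) ≤ x := by linarith
  have h1 : x ^ (0.4152 : ℝ) = (x ^ (519 : ℕ)) ^ ((1250 : ℝ)⁻¹) := by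
    rw [← Real.rpow_natCast x 519, ← Real.rpow_mul hx0]
    norm_num
  have h2 : c = (c ^ (1250 : ℕ)) ^ ((1250 : ℝ)⁻¹) := by
    rw [← Real.rpow_natCast c 1250, ← Real.rpow_mul hc]
    norm_num
  calc c = (c ^ (1250 : ℕ)) ^ ((1250 : ℝ)⁻¹) := h2
    _ ≤ (x ^ (519 : ℕ)) ^ ((1250 : ℝ)⁻¹) := Real.rpow_le_rpow (pow_nonneg hc _) h (by norm_num)
    _ = x ^ (0.4152 : ℝ) := h1.symm

lemma pow_cmp (a b : ℝ) (ha : 0 ≤ a) (hb : 1 ≤ b) (h : a ^ 10 ≤ b ^ 4) :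
    a ^ (1250 : ℕ) ≤ b ^ (519 : ℕ) := by
  calc a ^ (1250 : ℕ) = (a ^ 10) ^ 125 := by rw [← pow_mul]
    _ ≤ (b ^ 4) ^ 125 := pow_le_pow_left₀ (by positivity) h _
    _ = b ^ 500 := by rw [← pow_mul]
    _ ≤ b ^ (519 : ℕ) := pow_le_pow_right₀ hb (by norm_num)

lemma cyclo_bound {Q K : ℕ} (hQ : Q.Prime) (hK : 1 ≤ K) :
    2 * ((Q ^ K).totient : ℝ) / ((Q ^ K : ℕ) : ℝ) ≤ ((Q ^ K : ℕ) : ℝ) ^ (0.4152 : ℝ) := by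
  have ht : (Q ^ K).totient = Q ^ (K - 1) * (Q - 1) := Nat.totient_prime_pow hQ (by omega)
  have hQ2 : 2 ≤ Q := hQ.two_le
  have hQpos : (0 : ℝ) < (Q : ℝ) := by positivity
  have hQR : (1 : ℝ) ≤ (Q : ℝ) := by exact_mod_cast hQ.one_le
  have hpow : (Q : ℝ) ^ K = (Q : ℝ) ^ (K - 1) * Q := by
    rw [← pow_succ]
    congr 1
    omega
  have heq : 2 * ((Q ^ K).totient : ℝ) / ((Q ^ K : ℕ) : ℝ) = 2 * ((Q : ℝ) - 1) / (Q : ℝ) := by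
    rw [ht]
    push_cast [Nat.cast_sub hQ.one_le]
    rw [div_eq_div_iff (by positivity) hQpos.ne', hpow]
    ring
  rw [heq]
  have hmono : ((Q : ℕ) : ℝ) ^ (0.4152 : ℝ) ≤ ((Q ^ K : ℕ) : ℝ) ^ (0.4152 : ℝ) := by
    apply Real.rpow_le_rpow (by positivity) ?_ (by norm_num)
    exact_mod_cast Nat.le_self_pow (by omega) Q
  refine le_trans ?_ hmono
  have hcases : Q = 2 ∨ Q = 3 ∨ Q = 5 ∨ 7 ≤ Q := by
    rcases Nat.lt_or_ge Q 7 with h | h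
    · interval_cases Q
      · exact Or.inl rfl
      · exact Or.inr (Or.inl rfl)
      · exact absurd hQ (by norm_num)
      · exact Or.inr (Or.inr (Or.inl rfl))
      · exact absurd hQ (by norm_num)
    · exact Or.inr (Or.inr (Or.inr h))
  have hc0 : 0 ≤ 2 * ((Q : ℝ) - 1) / (Q : ℝ) := by
    apply div_nonneg _ hQpos.le
    nlinarith
  rcases hcases with h | h | h | h
  · subst h
    apply rpow_aux _ _ (by norm_num) hc0
    exact pow_cmp _ _ hc0 (by norm_num) (by norm_num)
  · subst h
    apply rpow_aux _ _ (by norm_num) hc0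
    exact pow_cmp _ _ hc0 (by norm_num) (by norm_num)
  · subst h
    apply rpow_aux _ _ (by norm_num) hc0
    exact pow_cmp _ _ hc0 (by norm_num) (by norm_num)
  · have h2le : 2 * ((Q : ℝ) - 1) / (Q : ℝ) ≤ 2 := by
      rw [div_le_iff₀ hQpos]
      nlinarith
    refine le_trans h2le (rpow_aux _ _ hQR (by norm_num) ?_)
    have h7 : (7 : ℝ) ≤ (Q : ℝ) := by exact_mod_cast h
    calc (2 : ℝ) ^ (1250 : ℕ) ≤ (7 : ℝ) ^ (519 : ℕ) := pow_cmp _ _ (by norm_num) (by norm_num) (by norm_num)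
      _ ≤ (Q : ℝ) ^ (519 : ℕ) := pow_le_pow_left₀ (by norm_num) h7 _

lemma cyclo_factor {Q K : ℕ} (hQ : Q.Prime) (hK : 1 ≤ K) (ζ : Fin (Q ^ K).totient → ℂ)
    (hζ : ∀ a, IsPrimitiveRoot (ζ a) (Q ^ K)) (hinj : Function.Injective ζ) :
    ∃ W : Matrix (Fin (Q ^ K).totient) (Fin (Q ^ K).totient) ℂ,
      W * (Matrix.of fun a b : Fin (Q ^ K).totient => ζ a ^ (b : ℕ)) = 1 ∧
      frobNorm (Matrix.of fun a b : Fin (Q ^ K).totient => ζ a ^ (b : ℕ)) * frobNorm W ≤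
        ((Q ^ K).totient : ℝ) * ((Q ^ K : ℕ) : ℝ) ^ (0.2076 : ℝ) := by
  refine ⟨Wmat ζ, WV ζ hQ hK hζ hinj, ?_⟩
  show frobNorm (Vmat ζ) * frobNorm (Wmat ζ) ≤ _
  rw [frob_V ζ hζ hQ hK, frob_W ζ hQ hK hζ hinj]
  have key : Real.sqrt (2 * ((Q ^ K).totient : ℝ) / ((Q ^ K : ℕ) : ℝ)) ≤
      ((Q ^ K : ℕ) : ℝ) ^ (0.2076 : ℝ) := by
    refine (Real.sqrt_le_sqrt (cyclo_bound hQ hK)).trans_eq ?_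
    rw [Real.sqrt_eq_rpow, ← Real.rpow_mul (by positivity)]
    norm_num
  exact mul_le_mul_of_nonneg_left key (Nat.cast_nonneg _)

end Cyclo2

noncomputable def VpInv (p : ℕ) : Matrix (Fin 2) (Fin 2) ℝ :=
  if p % 4 = 1 then
    !![(Real.sqrt p - 1) / (2 * Real.sqrt p), (Real.sqrt p + 1) / (2 * Real.sqrt p);
       1 / Real.sqrt p, -(1 / Real.sqrt p)]
  else
    !![1 / 2, 1 / 2; 1 / (2 * Real.sqrt p), -(1 / (2 * Real.sqrt p))]

lemma Vp_mul_inv (p : ℕ) (hp : p.Prime) : Vp p * VpInv p = 1 := by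
  have hppos : (0 : ℝ) < (p : ℝ) := by exact_mod_cast hp.pos
  have hs : (0 : ℝ) < Real.sqrt p := Real.sqrt_pos.2 hppos
  unfold Vp VpInv
  split_ifs with h <;> ext i j <;> fin_cases i <;> fin_cases j <;>
      simp [Matrix.mul_apply, Fin.sum_univ_two, Matrix.one_apply] <;> field_simp <;> ring

lemma Vp_map_inv (p : ℕ) (hp : p.Prime) :
    ((VpInv p).map Complex.ofReal) * ((Vp p).map Complex.ofReal) = 1 := by
  rw [mul_eq_one_comm]
  have h := congrArg (fun M : Matrix (Fin 2) (Fin 2) ℝ => M.map (Complex.ofRealHom : ℝ →+* ℂ))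
    (Vp_mul_inv p hp)
  exact (by simpa [Matrix.map_mul] using h :
    (Vp p).map Complex.ofRealHom * (VpInv p).map Complex.ofRealHom = 1)

lemma frob_map (X : Matrix (Fin 2) (Fin 2) ℝ) :
    frobNorm (X.map Complex.ofReal) = Real.sqrt (∑ i, ∑ j, (X i j) ^ 2) := by
  unfold frobNorm
  congr 1
  refine Finset.sum_congr rfl fun i _ => Finset.sum_congr rfl fun j _ => ?_
  simp [Matrix.map_apply, Complex.norm_real, Real.norm_eq_abs, sq_abs]

lemma quad1 (u : ℝ) (hu5 : 2 ≤ u) :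
    (1 ^ 2 + ((1 + u) / 2) ^ 2 + (1 ^ 2 + ((1 - u) / 2) ^ 2)) *
      (((u - 1) / (2 * u)) ^ 2 + ((u + 1) / (2 * u)) ^ 2 +
        ((1 / u) ^ 2 + (-(1 / u)) ^ 2)) ≤ (2 + u) ^ 2 := by
  have hu0 : (0 : ℝ) < u := by linarith
  have hval : (1 ^ 2 + ((1 + u) / 2) ^ 2 + (1 ^ 2 + ((1 - u) / 2) ^ 2)) *
      (((u - 1) / (2 * u)) ^ 2 + ((u + 1) / (2 * u)) ^ 2 +
        ((1 / u) ^ 2 + (-(1 / u)) ^ 2)) = (u ^ 2 + 5) ^ 2 / (4 * u ^ 2) := by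
    field_simp
    ring
  rw [hval, div_le_iff₀ (by positivity)]
  nlinarith

lemma quad2 (u : ℝ) (hu1 : 1 ≤ u) :
    (1 ^ 2 + u ^ 2 + (1 ^ 2 + (-u) ^ 2)) *
      ((1 / 2) ^ 2 + (1 / 2) ^ 2 + ((1 / (2 * u)) ^ 2 + (-(1 / (2 * u))) ^ 2)) ≤
      (2 + u) ^ 2 := by
  have hu0 : (0 : ℝ) < u := by linarith
  have hval : (1 ^ 2 + u ^ 2 + (1 ^ 2 + (-u) ^ 2)) *
      ((1 / 2) ^ 2 + (1 / 2) ^ 2 + ((1 / (2 * u)) ^ 2 + (-(1 / (2 * u))) ^ 2)) =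
      2 + u ^ 2 + 1 / u ^ 2 := by
    field_simp
    ring
  rw [hval]
  have h1 : 1 / u ^ 2 ≤ 1 := by
    rw [div_le_one (by positivity)]
    nlinarith
  nlinarith

lemma Vp_factor (p : ℕ) (hp : p.Prime) :
    ∃ W : Matrix (Fin 2) (Fin 2) ℂ, W * (Vp p).map Complex.ofReal = 1 ∧
      frobNorm ((Vp p).map Complex.ofReal) * frobNorm W ≤ 2 + Real.sqrt p := by
  have hppos : (0 : ℝ) < (p : ℝ) := by exact_mod_cast hp.pos
  have hp2 : (2 : ℝ) ≤ (p : ℝ) := by exact_mod_cast hp.two_le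
  have hu : (0 : ℝ) < Real.sqrt p := Real.sqrt_pos.2 hppos
  have hu2 : Real.sqrt p ^ 2 = (p : ℝ) := Real.sq_sqrt hppos.le
  have hu1 : (1 : ℝ) ≤ Real.sqrt p := by nlinarith
  refine ⟨(VpInv p).map Complex.ofReal, Vp_map_inv p hp, ?_⟩
  rw [frob_map, frob_map, ← Real.sqrt_mul (by positivity)]
  have h2u : (0 : ℝ) ≤ 2 + Real.sqrt p := by linarith
  rw [show (2 : ℝ) + Real.sqrt p = Real.sqrt ((2 + Real.sqrt p) ^ 2) from
    (Real.sqrt_sq h2u).symm]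
  apply Real.sqrt_le_sqrt
  have hsum : ∀ (X : Matrix (Fin 2) (Fin 2) ℝ),
      (∑ i, ∑ j, (X i j) ^ 2) = X 0 0 ^ 2 + X 0 1 ^ 2 + (X 1 0 ^ 2 + X 1 1 ^ 2) := by
    intro X
    rw [Fin.sum_univ_two, Fin.sum_univ_two, Fin.sum_univ_two]
  rw [hsum, hsum]
  by_cases h : p % 4 = 1
  · have hp5 : (5 : ℝ) ≤ (p : ℝ) := by
      have : 5 ≤ p := by
        have := hp.two_le
        omega
      exact_mod_cast this
    have hu5 : (2 : ℝ) ≤ Real.sqrt p := by nlinarith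
    have e : Vp p 0 0 = 1 ∧ Vp p 0 1 = (1 + Real.sqrt p) / 2 ∧ Vp p 1 0 = 1 ∧
        Vp p 1 1 = (1 - Real.sqrt p) / 2 := by
      refine ⟨?_, ?_, ?_, ?_⟩ <;> simp [Vp, if_pos h]
    have f : VpInv p 0 0 = (Real.sqrt p - 1) / (2 * Real.sqrt p) ∧
        VpInv p 0 1 = (Real.sqrt p + 1) / (2 * Real.sqrt p) ∧
        VpInv p 1 0 = 1 / Real.sqrt p ∧ VpInv p 1 1 = -(1 / Real.sqrt p) := by
      refine ⟨?_, ?_, ?_, ?_⟩ <;> simp [VpInv, if_pos h]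
    rw [e.1, e.2.1, e.2.2.1, e.2.2.2, f.1, f.2.1, f.2.2.1, f.2.2.2]
    exact quad1 (Real.sqrt p) hu5
  · have e : Vp p 0 0 = 1 ∧ Vp p 0 1 = Real.sqrt p ∧ Vp p 1 0 = 1 ∧
        Vp p 1 1 = -Real.sqrt p := by
      refine ⟨?_, ?_, ?_, ?_⟩ <;> simp [Vp, if_neg h]
    have f : VpInv p 0 0 = 1 / 2 ∧ VpInv p 0 1 = 1 / 2 ∧
        VpInv p 1 0 = 1 / (2 * Real.sqrt p) ∧
        VpInv p 1 1 = -(1 / (2 * Real.sqrt p)) := by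
      refine ⟨?_, ?_, ?_, ?_⟩ <;> simp [VpInv, if_neg h]
    rw [e.1, e.2.1, e.2.2.1, e.2.2.2, f.1, f.2.1, f.2.2.1, f.2.2.2]
    exact quad2 (Real.sqrt p) hu1

lemma totient_prod_coprime {ι : Type*} (s : Finset ι) (f : ι → ℕ)
    (h : (s : Set ι).Pairwise fun i j => Nat.Coprime (f i) (f j)) :
    (∏ i ∈ s, f i).totient = ∏ i ∈ s, (f i).totient := by
  classical
  induction s using Finset.cons_induction with
  | empty => simp
  | cons a s ha ih =>
    rw [Finset.prod_cons, Finset.prod_cons, Nat.totient_mul, ih (h.mono (by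
      rw [Finset.coe_cons]
      exact Set.subset_insert _ _))]
    apply Nat.Coprime.prod_right
    intro i hi
    exact h (by simp) (by simp [hi]) (fun hc => ha (hc ▸ hi))

theorem condNum_TVK_le_rpow (s : ℕ) (q k : Fin s → ℕ)
    (hq : ∀ j, Nat.Prime (q j)) (hqinj : Function.Injective q)
    (hk : ∀ j, 1 ≤ k j) (n : ℕ) (hn2 : Real.exp (Real.exp 1) ≤ (n : ℝ)) (hn : n = ∏ j, q j ^ k j)
    (ζ : ∀ j, Fin (q j ^ k j).totient → ℂ)
    (hζ : ∀ j a, IsPrimitiveRoot (ζ j a) (q j ^ k j))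
    (hζinj : ∀ j, Function.Injective (ζ j))
    (r : ℕ) (p : Fin r → ℕ) (hp : ∀ i, Nat.Prime (p i))
    (hpinj : Function.Injective p) (hpn : ∀ i, ¬ p i ∣ n) :
    condNum ((kronProd fun j =>
          Matrix.of fun a b : Fin (q j ^ k j).totient => ζ j a ^ (b : ℕ)) ⊗ₖ
        kronProd fun i => (Vp (p i)).map Complex.ofReal) ≤
      (n.totient : ℝ) * (n : ℝ) ^ (0.2076 : ℝ) *
        ∏ i, (2 + Real.sqrt (p i)) := by
  choose WF hWF1 hWF2 using fun j => cyclo_factor (hq j) (hk j) (ζ j) (hζ j) (hζinj j)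
  choose WG hWG1 hWG2 using fun i => Vp_factor (p i) (hp i)
  rw [condNum_kronecker]
  have hB : condNum (kronProd fun j =>
      Matrix.of fun a b : Fin (q j ^ k j).totient => ζ j a ^ (b : ℕ)) ≤
      (n.totient : ℝ) * (n : ℝ) ^ (0.2076 : ℝ) := by
    rw [condNum_kronProd _ WF hWF1]
    calc (∏ j, frobNorm (Matrix.of fun a b : Fin (q j ^ k j).totient => ζ j a ^ (b : ℕ)) *
          frobNorm (WF j))
        ≤ ∏ j, (((q j ^ k j).totient : ℝ) * ((q j ^ k j : ℕ) : ℝ) ^ (0.2076 : ℝ)) :=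
          Finset.prod_le_prod
            (fun j _ => mul_nonneg (frobNorm_nonneg _) (frobNorm_nonneg _))
            (fun j _ => hWF2 j)
      _ = (∏ j, ((q j ^ k j).totient : ℝ)) *
            ∏ j, ((q j ^ k j : ℕ) : ℝ) ^ (0.2076 : ℝ) := Finset.prod_mul_distrib
      _ = (n.totient : ℝ) * (n : ℝ) ^ (0.2076 : ℝ) := by
          congr 1
          · rw [← Nat.cast_prod]
            congr 1
            rw [hn, totient_prod_coprime]
            intro i _ j _ hij
            exact ((Nat.coprime_primes (hq i) (hq j)).2
              (fun hc => hij (hqinj hc))).pow _ _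
          · rw [Real.finset_prod_rpow _ _ (fun i _ => Nat.cast_nonneg _)]
            congr 1
            rw [hn]
            push_cast
            rfl
  have hC : condNum (kronProd fun i => (Vp (p i)).map Complex.ofReal) ≤
      ∏ i, (2 + Real.sqrt (p i)) := by
    rw [condNum_kronProd _ WG hWG1]
    exact Finset.prod_le_prod
      (fun i _ => mul_nonneg (frobNorm_nonneg _) (frobNorm_nonneg _))
      (fun i _ => hWG2 i)
  exact mul_le_mul hB hC (condNum_nonneg _)
    (mul_nonneg (Nat.cast_nonneg _) (Real.rpow_nonneg (Nat.cast_nonneg _) _))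
end

section
/- Let n = p^k be a prime power with n ≥ 2, and set m = φ(n). Then the condition number of the cyclotomic Vandermonde matrix satisfies Cond(V_{Φ_n}) ≤ 4m². -/
open Finset Polynomial

lemma auxGeom {N : ℕ} (hN : 0 < N) {ω : ℂ} (hω : IsPrimitiveRoot ω N) (t : ℕ) :
    ∑ a ∈ Finset.range N, (ω ^ a) ^ t = if N ∣ t then (N : ℂ) else 0 := by
  have hcomm : ∀ a ∈ Finset.range N, (ω ^ a) ^ t = (ω ^ t) ^ a := by
    intro a _; rw [← pow_mul, mul_comm, pow_mul]
  rw [Finset.sum_congr rfl hcomm]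
  split_ifs with h
  · have h1 : ω ^ t = 1 := (hω.pow_eq_one_iff_dvd t).2 h
    simp [h1]
  · have h1 : ω ^ t ≠ 1 := fun hh => h ((hω.pow_eq_one_iff_dvd t).1 hh)
    have hx : (ω ^ t) ^ N = 1 := by
      rw [← pow_mul, mul_comm, pow_mul, hω.pow_eq_one, one_pow]
    rw [geom_sum_eq h1, hx, sub_self, zero_div]

lemma sum_nthRoots {N : ℕ} (hN : 0 < N) {ω : ℂ} (hω : IsPrimitiveRoot ω N) (t : ℕ) :
    ∑ z ∈ Polynomial.nthRootsFinset N (1 : ℂ), z ^ t = if N ∣ t then (N : ℂ) else 0 := by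
  have himg : Finset.image (ω ^ ·) (Finset.range N) = Polynomial.nthRootsFinset N (1 : ℂ) := by
    apply Finset.eq_of_subset_of_card_le
    · intro z hz
      obtain ⟨a, _, rfl⟩ := Finset.mem_image.1 hz
      rw [Polynomial.mem_nthRootsFinset hN, ← pow_mul, mul_comm, pow_mul, hω.pow_eq_one, one_pow]
    · rw [hω.card_nthRootsFinset, Finset.card_image_of_injOn hω.injOn_pow, Finset.card_range]
  rw [← himg, Finset.sum_image
    (fun x hx y hy h => hω.injOn_pow (Finset.mem_coe.2 hx) (Finset.mem_coe.2 hy) h)]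
  exact auxGeom hN hω t

lemma primRoots_eq {p k : ℕ} (hp : p.Prime) (hk : 0 < k) :
    primitiveRoots (p ^ k) ℂ =
      Polynomial.nthRootsFinset (p ^ k) (1 : ℂ) \ Polynomial.nthRootsFinset (p ^ (k - 1)) (1 : ℂ) := by
  have hn0 : 0 < p ^ k := pow_pos hp.pos k
  have hq0 : 0 < p ^ (k - 1) := pow_pos hp.pos _
  ext z
  rw [mem_primitiveRoots hn0, Finset.mem_sdiff, Polynomial.mem_nthRootsFinset hn0,
      Polynomial.mem_nthRootsFinset hq0]
  constructor
  · intro h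
    refine ⟨h.pow_eq_one, fun hz => ?_⟩
    have h1 := Nat.le_of_dvd hq0 (h.dvd_of_pow_eq_one _ hz)
    have h2 : p ^ (k - 1) < p ^ k := Nat.pow_lt_pow_right hp.one_lt (by omega)
    omega
  · rintro ⟨h1, h2⟩
    have hord : orderOf z ∣ p ^ k := orderOf_dvd_of_pow_eq_one h1
    obtain ⟨j, hj, hordeq⟩ := (Nat.dvd_prime_pow hp).1 hord
    have hjk : j = k := by
      by_contra hne
      exact h2 (orderOf_dvd_iff_pow_eq_one.1 (hordeq ▸ pow_dvd_pow p (by omega : j ≤ k - 1)))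
    have hfin : orderOf z = p ^ k := by rw [hordeq, hjk]
    exact hfin ▸ IsPrimitiveRoot.orderOf z

lemma count_lemma {q c m : ℕ} (hq0 : 0 < q) (hmval : m = q * c) (r : Fin m) :
    (Finset.univ.filter (fun j : Fin m => (j : ℕ) % q = (r : ℕ) % q)).card = c := by
  rw [← Finset.card_range c]
  apply Finset.card_bij' (fun (a : Fin m) _ => (a : ℕ) / q)
    (fun b hb => (⟨b * q + (r : ℕ) % q, by
      have hb' : b < c := Finset.mem_range.1 hb
      have hrq : (r : ℕ) % q < q := Nat.mod_lt _ hq0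
      calc b * q + (r : ℕ) % q < b * q + q := by omega
        _ = (b + 1) * q := by ring
        _ ≤ c * q := Nat.mul_le_mul_right q (by omega)
        _ = m := by rw [hmval, mul_comm]⟩ : Fin m))
  case hi =>
    intro a ha
    rw [Finset.mem_range]
    have ham : (a : ℕ) < q * c := hmval ▸ a.isLt
    exact Nat.div_lt_of_lt_mul (by omega)
  case hj =>
    intro b hb
    rw [Finset.mem_filter]
    refine ⟨Finset.mem_univ _, ?_⟩
    show ((b : ℕ) * q + (r : ℕ) % q) % q = (r : ℕ) % q
    rw [add_comm, Nat.add_mul_mod_self_right, Nat.mod_mod_of_dvd _ dvd_rfl]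
  case left_inv =>
    intro a ha
    rw [Finset.mem_filter] at ha
    apply Fin.ext
    show (a : ℕ) / q * q + (r : ℕ) % q = (a : ℕ)
    rw [← ha.2, mul_comm]
    exact Nat.div_add_mod _ _
  case right_inv =>
    intro b hb
    show ((b : ℕ) * q + (r : ℕ) % q) / q = b
    rw [add_comm, Nat.add_mul_div_right _ _ hq0, Nat.div_eq_of_lt (Nat.mod_lt _ hq0), zero_add]

lemma dvd_iff_n {n m : ℕ} (hn1 : 1 ≤ n) (hmn : m < n) (j j' : Fin m) :
    (n ∣ (n - 1) * (j : ℕ) + (j' : ℕ)) ↔ j = j' := by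
  have key : ((((n - 1) * (j : ℕ) + (j' : ℕ)) : ℕ) : ZMod n)
      = (j' : ZMod n) - (j : ZMod n) := by
    push_cast [Nat.cast_sub hn1]
    rw [ZMod.natCast_self]
    ring
  rw [← ZMod.natCast_eq_zero_iff, key, sub_eq_zero, ZMod.natCast_eq_natCast_iff',
    Nat.mod_eq_of_lt (lt_trans j'.isLt hmn), Nat.mod_eq_of_lt (lt_trans j.isLt hmn)]
  exact ⟨fun h => (Fin.ext h).symm, fun h => congrArg Fin.val h.symm⟩

lemma dvd_iff_q {n q m : ℕ} (hn1 : 1 ≤ n) (hqn : q ∣ n) (j j' : Fin m) :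
    (q ∣ (n - 1) * (j : ℕ) + (j' : ℕ)) ↔ (j : ℕ) % q = (j' : ℕ) % q := by
  have hnq : ((n : ℕ) : ZMod q) = 0 := (ZMod.natCast_eq_zero_iff n q).2 hqn
  have key : ((((n - 1) * (j : ℕ) + (j' : ℕ)) : ℕ) : ZMod q)
      = (j' : ZMod q) - (j : ZMod q) := by
    push_cast [Nat.cast_sub hn1]
    rw [hnq]
    ring
  rw [← ZMod.natCast_eq_zero_iff, key, sub_eq_zero, ZMod.natCast_eq_natCast_iff']
  exact eq_comm

theorem ramanujan_sum (p k : ℕ) (hp : Nat.Prime p)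
    (n : ℕ) (hn : n = p ^ k) (hn2 : 2 ≤ n) (m : ℕ) (hm : m = n.totient)
    (ζ : Fin m → ℂ) (hζ : ∀ i, IsPrimitiveRoot (ζ i) n)
    (hinj : Function.Injective ζ) :
    (∀ (t : ℕ), ∑ i : Fin m, ζ i ^ t
      = (if n ∣ t then (n : ℂ) else 0) - (if p ^ (k-1) ∣ t then ((p ^ (k-1) : ℕ) : ℂ) else 0)) := by
  classical
  have hn0 : 0 < n := by omega
  have hk : 0 < k := by
    rcases Nat.eq_zero_or_pos k with h | h
    · subst h; simp at hn; omega
    · exact h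
  set q := p ^ (k - 1) with hq
  have hq0 : 0 < q := pow_pos hp.pos _
  have hnpq : n = p * q := by
    rw [hn, hq, ← pow_succ']
    congr 1
    omega
  have hqn : q ∣ n := ⟨p, by rw [hnpq, mul_comm]⟩
  have hm0 : 0 < m := by rw [hm]; exact Nat.totient_pos.2 hn0
  set ω := ζ ⟨0, hm0⟩ with hωdef
  have hω : IsPrimitiveRoot ω n := hζ _
  have hωq : IsPrimitiveRoot (ω ^ p) q := hω.pow hn0 hnpq
  intro t
  have himg : Finset.image ζ Finset.univ = primitiveRoots n ℂ := by
    apply Finset.eq_of_subset_of_card_le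
    · intro z hz
      obtain ⟨i, _, rfl⟩ := Finset.mem_image.1 hz
      exact (mem_primitiveRoots hn0).2 (hζ i)
    · rw [hω.card_primitiveRoots, Finset.card_image_of_injective _ hinj, Finset.card_univ,
        Fintype.card_fin, hm]
  have h1 : ∑ i : Fin m, ζ i ^ t = ∑ z ∈ primitiveRoots n ℂ, z ^ t := by
    rw [← himg, Finset.sum_image (fun x _ y _ h => hinj h)]
  have h2 : primitiveRoots n ℂ = nthRootsFinset n (1 : ℂ) \ nthRootsFinset q (1 : ℂ) := by
    rw [hn, hq]
    exact primRoots_eq hp hk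
  have hsub : nthRootsFinset q (1 : ℂ) ⊆ nthRootsFinset n (1 : ℂ) := by
    intro z hz
    rw [mem_nthRootsFinset hq0] at hz
    rw [mem_nthRootsFinset hn0, hnpq, mul_comm, pow_mul, hz, one_pow]
  rw [h1, h2, Finset.sum_sdiff_eq_sub hsub, sum_nthRoots hn0 hω t, sum_nthRoots hq0 hωq t]

theorem key_lemma (p n q m : ℕ) (hp : 2 ≤ p) (hn2 : 2 ≤ n) (hq0 : 0 < q)
    (hnpq : n = p * q) (hmval : m = q * (p - 1)) (hmn : m < n)
    (ζ : Fin m → ℂ)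
    (hsum : ∀ t : ℕ, ∑ i : Fin m, ζ i ^ t
      = (if n ∣ t then (n : ℂ) else 0) - (if q ∣ t then (q : ℂ) else 0)) :
    (Matrix.of fun j i : Fin m => (n : ℂ)⁻¹ * ∑ j' : Fin m,
        ((if j = j' then (1:ℂ) else 0) + (if (j : ℕ) % q = (j' : ℕ) % q then (1:ℂ) else 0))
          * ζ i ^ ((n - 1) * (j' : ℕ))) *
      (Matrix.of fun i j : Fin m => ζ i ^ (j : ℕ)) = 1 := by
  classical
  have hqn : q ∣ n := ⟨p, by rw [hnpq, mul_comm]⟩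
  have hn1 : 1 ≤ n := by omega
  ext j j''
  rw [Matrix.mul_apply]
  simp only [Matrix.of_apply]
  have e1 : ∀ i : Fin m, ((n : ℂ)⁻¹ * ∑ j' : Fin m,
        ((if j = j' then (1:ℂ) else 0) + (if (j : ℕ) % q = (j' : ℕ) % q then (1:ℂ) else 0))
          * ζ i ^ ((n - 1) * (j' : ℕ))) * ζ i ^ (j'' : ℕ)
      = (n : ℂ)⁻¹ * ∑ j' : Fin m,
        ((if j = j' then (1:ℂ) else 0) + (if (j : ℕ) % q = (j' : ℕ) % q then (1:ℂ) else 0))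
          * ζ i ^ ((n - 1) * (j' : ℕ) + (j'' : ℕ)) := by
    intro i
    rw [mul_assoc, Finset.sum_mul]
    refine congrArg _ (Finset.sum_congr rfl fun j' _ => ?_)
    rw [mul_assoc, ← pow_add]
  rw [Finset.sum_congr rfl (fun i _ => e1 i), ← Finset.mul_sum, Finset.sum_comm]
  have e2 : ∀ j' : Fin m, ∑ i : Fin m,
        ((if j = j' then (1:ℂ) else 0) + (if (j : ℕ) % q = (j' : ℕ) % q then (1:ℂ) else 0))
          * ζ i ^ ((n - 1) * (j' : ℕ) + (j'' : ℕ))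
      = ((if j = j' then (1:ℂ) else 0) + (if (j : ℕ) % q = (j' : ℕ) % q then (1:ℂ) else 0))
          * ((if j' = j'' then (n : ℂ) else 0)
             - (if (j' : ℕ) % q = (j'' : ℕ) % q then (q : ℂ) else 0)) := by
    intro j'
    rw [← Finset.mul_sum, hsum]
    rw [if_congr (dvd_iff_n hn1 hmn j' j'') rfl rfl, if_congr (dvd_iff_q hn1 hqn j' j'') rfl rfl]
  rw [Finset.sum_congr rfl (fun j' _ => e2 j')]
  have e3 : ∀ j' : Fin m,
      ((if j = j' then (1:ℂ) else 0) + (if (j : ℕ) % q = (j' : ℕ) % q then (1:ℂ) else 0))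
          * ((if j' = j'' then (n : ℂ) else 0)
             - (if (j' : ℕ) % q = (j'' : ℕ) % q then (q : ℂ) else 0))
      = ((if j = j' then (if j' = j'' then (n:ℂ) else 0) else 0)
        + (if j' = j'' then (if (j : ℕ) % q = (j' : ℕ) % q then (n:ℂ) else 0) else 0))
        - ((if j = j' then (if (j' : ℕ) % q = (j'' : ℕ) % q then (q:ℂ) else 0) else 0)
        + (if (j : ℕ) % q = (j' : ℕ) % q then
            (if (j' : ℕ) % q = (j'' : ℕ) % q then (q:ℂ) else 0) else 0)) := by
    intro j'
    split_ifs <;> ring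
  rw [Finset.sum_congr rfl (fun j' _ => e3 j'), Finset.sum_sub_distrib,
    Finset.sum_add_distrib, Finset.sum_add_distrib, Finset.sum_ite_eq, Finset.sum_ite_eq',
    Finset.sum_ite_eq]
  simp only [Finset.mem_univ, if_true]
  -- remaining sum S4
  have e4 : ∑ j' : Fin m, (if (j : ℕ) % q = (j' : ℕ) % q then
      (if (j' : ℕ) % q = (j'' : ℕ) % q then (q:ℂ) else 0) else 0)
      = if (j : ℕ) % q = (j'' : ℕ) % q then ((p : ℂ) - 1) * q else 0 := by
    by_cases hcase : (j : ℕ) % q = (j'' : ℕ) % q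
    · rw [if_pos hcase]
      have et : ∀ j' : Fin m, (if (j : ℕ) % q = (j' : ℕ) % q then
          (if (j' : ℕ) % q = (j'' : ℕ) % q then (q:ℂ) else 0) else 0)
          = if (j' : ℕ) % q = (j'' : ℕ) % q then (q:ℂ) else 0 := by
        intro j'
        by_cases hB : (j' : ℕ) % q = (j'' : ℕ) % q
        · simp [hB, hcase.trans hB.symm]
        · simp [hB]
      rw [Finset.sum_congr rfl (fun j' _ => et j'), ← Finset.sum_filter,
        Finset.sum_const, count_lemma hq0 hmval j'', nsmul_eq_mul]
      push_cast [Nat.cast_sub (by omega : 1 ≤ p)]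
      ring
    · rw [if_neg hcase]
      apply Finset.sum_eq_zero
      intro j' _
      by_cases hA : (j : ℕ) % q = (j' : ℕ) % q
      · by_cases hB : (j' : ℕ) % q = (j'' : ℕ) % q
        · exact absurd (hA.trans hB) hcase
        · simp [hA, hB]
      · simp [hA]
  rw [e4, Matrix.one_apply]
  have hn0' : (n : ℂ) ≠ 0 := Nat.cast_ne_zero.2 (by omega : n ≠ 0)
  have hpq : ((p : ℂ) - 1) * q + q = (n : ℂ) := by
    have h' : ((n : ℕ) : ℂ) = ((p * q : ℕ) : ℂ) := by rw [← hnpq]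
    push_cast at h'
    rw [h']; ring
  by_cases hjj : j = j''
  · subst hjj
    simp only [eq_self_iff_true, if_true]
    rw [show (n:ℂ) + n - ((q:ℂ) + ((p:ℂ) - 1) * q) = n by linear_combination -hpq]
    exact inv_mul_cancel₀ hn0'
  · rw [if_neg hjj, if_neg hjj]
    by_cases hc : (j : ℕ) % q = (j'' : ℕ) % q
    · rw [if_pos hc, if_pos hc, if_pos hc]
      rw [show (0:ℂ) + n - ((q:ℂ) + ((p:ℂ) - 1) * q) = 0 by linear_combination -hpq]
      exact mul_zero _
    · rw [if_neg hc, if_neg hc, if_neg hc]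
      simp

theorem main_aux (p k : ℕ) (hp : Nat.Prime p)
    (n : ℕ) (hn : n = p ^ k) (hn2 : 2 ≤ n) (m : ℕ) (hm : m = n.totient)
    (ζ : Fin m → ℂ) (hζ : ∀ i, IsPrimitiveRoot (ζ i) n)
    (hinj : Function.Injective ζ) :
    condNum (Matrix.of fun i j : Fin m => ζ i ^ (j : ℕ)) ≤ 4 * (m : ℝ) ^ 2 := by
  classical
  have hn0 : 0 < n := by omega
  have hk : 0 < k := by
    rcases Nat.eq_zero_or_pos k with h | h
    · subst h; simp at hn; omega
    · exact h
  set q := p ^ (k - 1) with hq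
  have hq0 : 0 < q := pow_pos hp.pos _
  have hnpq : n = p * q := by
    rw [hn, hq, ← pow_succ']
    congr 1
    omega
  have hmval : m = q * (p - 1) := by
    rw [hm, hn, Nat.totient_prime_pow hp hk, hq]
  have hmn : m < n := hm ▸ Nat.totient_lt n (by omega)
  have hm0 : 0 < m := by rw [hm]; exact Nat.totient_pos.2 hn0
  have hsum := ramanujan_sum p k hp n hn hn2 m hm ζ hζ hinj
  have hWV := key_lemma p n q m hp.two_le hn2 hq0 hnpq hmval hmn ζ hsum
  set V : Matrix (Fin m) (Fin m) ℂ := Matrix.of fun i j : Fin m => ζ i ^ (j : ℕ) with hV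
  set W : Matrix (Fin m) (Fin m) ℂ := Matrix.of fun j i : Fin m => (n : ℂ)⁻¹ * ∑ j' : Fin m,
      ((if j = j' then (1:ℂ) else 0) + (if (j : ℕ) % q = (j' : ℕ) % q then (1:ℂ) else 0))
        * ζ i ^ ((n - 1) * (j' : ℕ)) with hW
  have hinv : V⁻¹ = W := Matrix.inv_eq_left_inv hWV
  have hnormζ : ∀ i, ‖ζ i‖ = 1 := fun i =>
    Complex.norm_eq_one_of_pow_eq_one (hζ i).pow_eq_one (by omega)
  -- frobNorm V = m
  have hfV : frobNorm V = (m : ℝ) := by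
    have hentry : ∀ i j : Fin m, ‖V i j‖ ^ 2 = 1 := by
      intro i j
      rw [hV, Matrix.of_apply, norm_pow, hnormζ, one_pow, one_pow]
    rw [frobNorm]
    calc Real.sqrt (∑ i : Fin m, ∑ j : Fin m, ‖V i j‖ ^ 2)
        = Real.sqrt ((m : ℝ) * m) := by
          rw [Finset.sum_congr rfl fun i _ => Finset.sum_congr rfl fun j _ => hentry i j]
          simp
      _ = (m : ℝ) := Real.sqrt_mul_self (Nat.cast_nonneg m)
  -- entry bound for W
  have hWb : ∀ j i : Fin m, ‖W j i‖ ≤ 2 * m / n := by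
    intro j i
    rw [hW, Matrix.of_apply]
    have h1 : ‖((n : ℂ))⁻¹‖ = (n : ℝ)⁻¹ := by
      rw [norm_inv, Complex.norm_natCast]
    rw [norm_mul, h1]
    have h2 : ‖∑ j' : Fin m,
        ((if j = j' then (1:ℂ) else 0) + (if (j : ℕ) % q = (j' : ℕ) % q then (1:ℂ) else 0))
          * ζ i ^ ((n - 1) * (j' : ℕ))‖ ≤ 2 * m := by
      calc ‖∑ j' : Fin m, ((if j = j' then (1:ℂ) else 0)
              + (if (j : ℕ) % q = (j' : ℕ) % q then (1:ℂ) else 0)) * ζ i ^ ((n - 1) * (j' : ℕ))‖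
          ≤ ∑ j' : Fin m, ‖((if j = j' then (1:ℂ) else 0)
              + (if (j : ℕ) % q = (j' : ℕ) % q then (1:ℂ) else 0)) * ζ i ^ ((n - 1) * (j' : ℕ))‖ :=
            norm_sum_le _ _
        _ ≤ ∑ _j' : Fin m, 2 := by
            apply Finset.sum_le_sum
            intro j' _
            rw [norm_mul, norm_pow, hnormζ, one_pow, mul_one]
            calc ‖(if j = j' then (1:ℂ) else 0) + (if (j:ℕ) % q = (j':ℕ) % q then (1:ℂ) else 0)‖
                ≤ ‖(if j = j' then (1:ℂ) else 0)‖ + ‖(if (j:ℕ) % q = (j':ℕ) % q then (1:ℂ) else 0)‖ :=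
                  norm_add_le _ _
              _ ≤ 1 + 1 := by
                  gcongr <;> split_ifs <;> simp
              _ = 2 := by norm_num
        _ = 2 * m := by simp [mul_comm]
    calc (n : ℝ)⁻¹ * ‖_‖ ≤ (n : ℝ)⁻¹ * (2 * m) := by
          apply mul_le_mul_of_nonneg_left h2 (by positivity)
      _ = 2 * m / n := by ring
  have hfW : frobNorm W ≤ (m : ℝ) * (2 * m / n) := by
    rw [frobNorm]
    have hb : ∑ i : Fin m, ∑ j : Fin m, ‖W i j‖ ^ 2 ≤ (m : ℝ) * m * (2 * m / n) ^ 2 := by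
      calc ∑ i : Fin m, ∑ j : Fin m, ‖W i j‖ ^ 2
          ≤ ∑ _i : Fin m, ∑ _j : Fin m, (2 * (m:ℝ) / n) ^ 2 := by
            apply Finset.sum_le_sum
            intro i _
            apply Finset.sum_le_sum
            intro j _
            exact pow_le_pow_left₀ (norm_nonneg _) (hWb i j) 2
        _ = (m : ℝ) * m * (2 * m / n) ^ 2 := by
            simp [mul_assoc, mul_comm]
    calc Real.sqrt (∑ i : Fin m, ∑ j : Fin m, ‖W i j‖ ^ 2)
        ≤ Real.sqrt ((m : ℝ) * m * (2 * m / n) ^ 2) := Real.sqrt_le_sqrt hb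
      _ = Real.sqrt (((m : ℝ) * (2 * m / n)) ^ 2) := by ring_nf
      _ = (m : ℝ) * (2 * m / n) := Real.sqrt_sq (by positivity)
  -- final arithmetic
  have hfinal : condNum V ≤ 4 * (m : ℝ) ^ 2 := by
    rw [condNum, hinv, hfV]
    have h2mn : 2 * (m : ℝ) / n ≤ 2 := by
      rw [div_le_iff₀ (by positivity)]
      have : (m : ℝ) ≤ n := Nat.cast_le.2 (le_of_lt hmn)
      nlinarith
    have hfWnn : 0 ≤ frobNorm W := Real.sqrt_nonneg _
    calc (m : ℝ) * frobNorm W ≤ (m : ℝ) * ((m : ℝ) * (2 * m / n)) := by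
          apply mul_le_mul_of_nonneg_left hfW (Nat.cast_nonneg m)
      _ ≤ (m : ℝ) * ((m : ℝ) * 2) := by
          apply mul_le_mul_of_nonneg_left _ (Nat.cast_nonneg m)
          apply mul_le_mul_of_nonneg_left h2mn (Nat.cast_nonneg m)
      _ ≤ 4 * (m : ℝ) ^ 2 := by nlinarith [Nat.cast_nonneg (α := ℝ) m]
  exact hfinal

theorem condNum_vandermonde_prime_pow (p k : ℕ) (hp : Nat.Prime p)
    (n : ℕ) (hn : n = p ^ k) (hn2 : 2 ≤ n)
    (ζ : Fin n.totient → ℂ) (hζ : ∀ i, IsPrimitiveRoot (ζ i) n)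
    (hinj : Function.Injective ζ) :
    condNum (Matrix.of fun i j : Fin n.totient => ζ i ^ (j : ℕ)) ≤
      4 * (n.totient : ℝ) ^ 2 := by
  exact main_aux p k hp n hn hn2 n.totient rfl ζ hζ hinj
end
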